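/- arXiv:1905.11821 — 11 statements merged into one kernel-verified Lean document; each statement's English description precedes it below -/
import Mathlib

section
/- Let (G,·) be a group, θ an automorphism of G, and b ∈ G such that θ(b) = b and θ^{n-1}(x) = b·x·b⁻¹ for all x ∈ G. Define f(x₁,…,xₙ) = x₁·θ(x₂)·θ²(x₃)⋯θ^{n-1}(xₙ)·b. Then (G,f) is an n-ary group (f is n-ary associative and all one-variable equations have unique solutions). -/
/-- `f` is an associative `n`-ary operation: inserting the inner application of `f`
at any position of a sequence of `2n-1` elements gives the same result. -/
def IsNAryAssoc {G : Type*} (n : ℕ) (f : List G → G) : Prop :=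
  ∀ (s : List G) (i j : ℕ), s.length = 2 * n - 1 → i + n ≤ s.length → j + n ≤ s.length →
    f (s.take i ++ f ((s.drop i).take n) :: s.drop (i + n)) =
      f (s.take j ++ f ((s.drop j).take n) :: s.drop (j + n))

/-- every one-variable equation `f (a₁, …, a_{i-1}, x, a_{i+1}, …, aₙ) = c`
has a unique solution `x`. -/
def NAryUniqueSolutions {G : Type*} (n : ℕ) (f : List G → G) : Prop :=
  ∀ (a : List G) (i : ℕ), a.length = n → i < n → ∀ c : G,
    ∃! x : G, f (a.take i ++ x :: a.drop (i + 1)) = c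

/-- `(G, f)` is an `n`-ary (polyadic) group. -/
def IsNAryGroup {G : Type*} (n : ℕ) (f : List G → G) : Prop :=
  IsNAryAssoc n f ∧ NAryUniqueSolutions n f

section Aux

variable {G : Type*} [Group G] (θ : G ≃* G)

private lemma iter_mul (k : ℕ) (x y : G) : (⇑θ)^[k] (x * y) = (⇑θ)^[k] x * (⇑θ)^[k] y := by
  induction k generalizing x y with
  | zero => simp
  | succ k ih => simp [Function.iterate_succ_apply, map_mul, ih]

private lemma iter_one (k : ℕ) : (⇑θ)^[k] (1 : G) = 1 := by
  induction k with
  | zero => rfl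
  | succ k ih => simp [Function.iterate_succ_apply, ih]

private def pprod (l : List G) : G := (l.mapIdx fun i x => (⇑θ)^[i] x).prod

private lemma pshift (l : List G) : ∀ k : ℕ,
    (l.mapIdx fun j x => (⇑θ)^[k + j] x).prod = (⇑θ)^[k] (pprod θ l) := by
  induction l with
  | nil => intro k; simp [pprod, iter_one]
  | cons a l ih =>
    intro k
    have h1 : (fun j (x : G) => (⇑θ)^[k + (j + 1)] x) = fun j x => (⇑θ)^[(k + 1) + j] x := by
      funext j x; congr 1; omega
    have h2 : (fun j (x : G) => (⇑θ)^[j + 1] x) = fun j x => (⇑θ)^[1 + j] x := by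
      funext j x; congr 1; omega
    simp only [pprod, List.mapIdx_cons, List.prod_cons, h1, h2, ih, Nat.add_zero]
    rw [iter_mul]
    rfl

private lemma pcons (x : G) (l : List G) : pprod θ (x :: l) = x * θ (pprod θ l) := by
  have h2 : (fun j (y : G) => (⇑θ)^[j + 1] y) = fun j y => (⇑θ)^[1 + j] y := by
    funext j y; congr 1; omega
  simp only [pprod, List.mapIdx_cons, List.prod_cons, h2]
  rw [pshift]
  rfl

private lemma papp (s t : List G) :
    pprod θ (s ++ t) = pprod θ s * (⇑θ)^[s.length] (pprod θ t) := by
  induction s with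
  | nil => simp [pprod]
  | cons a s ih =>
    rw [List.cons_append, pcons, ih, pcons]
    rw [map_mul, mul_assoc]
    congr 2
    rw [List.length_cons, Function.iterate_succ_apply']

end Aux

theorem theta_b_derived_is_nary_group {G : Type*} [Group G] (n : ℕ) (hn : 2 ≤ n)
    (θ : G ≃* G) (b : G) (hb : θ b = b)
    (hconj : ∀ x : G, (⇑θ)^[n - 1] x = b * x * b⁻¹) :
    IsNAryGroup n (fun l : List G => (l.mapIdx fun i x => (⇑θ)^[i] x).prod * b) := by
  have hbk : ∀ k : ℕ, (⇑θ)^[k] b = b := by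
    intro k
    induction k with
    | zero => rfl
    | succ k ih => simp [Function.iterate_succ_apply', ih, hb]
  constructor
  · -- associativity
    intro s i j hlen hi hj
    suffices H : ∀ i : ℕ, i + n ≤ s.length →
        ((s.take i ++ ((((s.drop i).take n).mapIdx fun i x => (⇑θ)^[i] x).prod * b)
            :: s.drop (i + n)).mapIdx fun i x => (⇑θ)^[i] x).prod * b =
          pprod θ s * b * b by
      simp only []
      rw [H i hi, H j hj]
    intro i hi
    have hA : (s.take i).length = i := by
      rw [List.length_take]; omega
    have hM : ((s.drop i).take n).length = n := by
      rw [List.length_take, List.length_drop]; omega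
    have hsplit : s = s.take i ++ ((s.drop i).take n ++ s.drop (i + n)) := by
      have h1 : s.drop (i + n) = (s.drop i).drop n := by
        rw [List.drop_drop]
      rw [h1, List.take_append_drop, List.take_append_drop]
    have hPM : (((s.drop i).take n).mapIdx fun i x => (⇑θ)^[i] x).prod
        = pprod θ ((s.drop i).take n) := rfl
    conv_rhs => rw [hsplit, papp, papp, hA, hM]
    show pprod θ _ * b = _
    rw [papp, pcons, hA, hPM]
    have key : ∀ y : G, b * θ y = (⇑θ)^[n] y * b := by
      intro y
      have hn1 : n = (n - 1) + 1 := by omega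
      rw [hn1, Function.iterate_succ_apply, hconj]
      group
    have inner : pprod θ ((s.drop i).take n) * b * θ (pprod θ (s.drop (i + n)))
        = pprod θ ((s.drop i).take n) * (⇑θ)^[n] (pprod θ (s.drop (i + n))) * b := by
      rw [mul_assoc, key, ← mul_assoc]
    rw [inner, iter_mul, hbk]
    group
  · -- unique solutions
    intro a i ha hi c
    have hA : (a.take i).length = i := by
      rw [List.length_take]; omega
    set L : G := pprod θ (a.take i) with hL
    set R : G := (⇑θ)^[i] (θ (pprod θ (a.drop (i + 1)))) * b with hR
    have hrw : ∀ x : G, ((a.take i ++ x :: a.drop (i + 1)).mapIdx fun i x => (⇑θ)^[i] x).prod * b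
        = L * (⇑θ)^[i] x * R := by
      intro x
      show pprod θ _ * b = _
      rw [papp, pcons, hA, iter_mul, hR, hL]
      group
    have hli : ∀ y : G, (⇑θ)^[i] ((⇑θ.symm)^[i] y) = y := fun y =>
      (Function.LeftInverse.iterate θ.apply_symm_apply i) y
    simp only [hrw]
    refine ⟨(⇑θ.symm)^[i] (L⁻¹ * c * R⁻¹), ?_, fun y hy => ?_⟩
    · show L * (⇑θ)^[i] ((⇑θ.symm)^[i] (L⁻¹ * c * R⁻¹)) * R = c
      rw [hli]; group
    · have hy' : L * (⇑θ)^[i] y * R = c := hy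
      apply θ.injective.iterate i
      rw [hli, ← hy']
      group
end

section
/- Let (G,f) be an n-ary group with n ≥ 3, and fix a ∈ G. Define x ∗ y = f(x, a^{(n-2)}, y), where a^{(n-2)} denotes n−2 copies of a. Then (G,∗) is a group whose identity element is the skew element ā, and the inverse of x in (G,∗) is f(ā, x^{(n-3)}, x̄, ā). -/
section Helpers

variable {G : Type*} {n : ℕ} {f : List G → G}

private lemma split3_take (p q r : List G) :
    (p ++ q ++ r).take p.length = p := by
  rw [List.append_assoc]; exact List.take_left ..

private lemma split3_mid (p q r : List G) (hq : q.length = n) :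
    ((p ++ q ++ r).drop p.length).take n = q := by
  rw [List.append_assoc, List.drop_left, List.take_left' hq]

private lemma split3_drop (p q r : List G) (hq : q.length = n) :
    (p ++ q ++ r).drop (p.length + n) = r :=
  List.drop_left' (by simp [hq])

private lemma assoc_apply (hf : IsNAryAssoc n f)
    (u v w u' v' w' : List G) (hv : v.length = n) (hv' : v'.length = n)
    (hlen : u.length + v.length + w.length = 2 * n - 1)
    (heq : u ++ v ++ w = u' ++ v' ++ w') :
    f (u ++ f v :: w) = f (u' ++ f v' :: w') := by
  have hslen : (u ++ v ++ w).length = 2 * n - 1 := by simp <;> omega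
  have hlen' : u'.length + v'.length + w'.length = 2 * n - 1 := by
    have := congrArg List.length heq; simp at this; omega
  have key := hf (u ++ v ++ w) u.length u'.length hslen
    (by rw [hslen]; omega) (by rw [hslen]; omega)
  rw [split3_take u v w, split3_mid u v w hv, split3_drop u v w hv] at key
  rw [heq, split3_take u' v' w', split3_mid u' v' w' hv',
    split3_drop u' v' w' hv'] at key
  exact key

private lemma cancel_last (hn : 1 ≤ n) (hu : NAryUniqueSolutions n f)
    (p : List G) (hp : p.length = n - 1) {x y : G}
    (hxy : f (p ++ [x]) = f (p ++ [y])) : x = y := by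
  obtain ⟨z, -, huniq⟩ := hu (p ++ [y]) (n - 1) (by simp [hp] <;> omega) (by omega)
    (f (p ++ [y]))
  have e1 : (p ++ [y]).take (n - 1) = p := List.take_left' hp
  have e2 : (p ++ [y]).drop (n - 1 + 1) = [] :=
    List.drop_of_length_le (by simp [hp] <;> omega)
  have hx := huniq x (by rw [e1, e2]; simpa using hxy)
  have hy := huniq y (by rw [e1, e2])
  rw [hx, hy]

private lemma cancel_first (hn : 1 ≤ n) (hu : NAryUniqueSolutions n f)
    (p : List G) (hp : p.length = n - 1) {x y : G}
    (hxy : f (x :: p) = f (y :: p)) : x = y := by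
  obtain ⟨z, -, huniq⟩ := hu (y :: p) 0 (by simp [hp] <;> omega) (by omega) (f (y :: p))
  have hx := huniq x (by simpa using hxy)
  have hy := huniq y (by simp)
  rw [hx, hy]

private lemma rep_comm (x : G) (i j : ℕ) (l : List G) :
    List.replicate i x ++ (List.replicate j x ++ l)
      = List.replicate j x ++ (List.replicate i x ++ l) := by
  rw [← List.append_assoc, ← List.append_assoc, ← List.replicate_add,
    ← List.replicate_add, Nat.add_comm]

end Helpers

theorem retract_is_group {G : Type*} (n : ℕ) (hn : 3 ≤ n) (f : List G → G)
    (h : IsNAryGroup n f) (skew : G → G)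
    (hskew : ∀ x : G, f (List.replicate (n - 1) x ++ [skew x]) = x) (a : G)
    (star : G → G → G)
    (hstar : ∀ x y : G, star x y = f (x :: (List.replicate (n - 2) a ++ [y])))
    (inv : G → G)
    (hinv : ∀ x : G, inv x = f (skew a :: (List.replicate (n - 3) x ++ [skew x, skew a]))) :
    (∀ x y z : G, star (star x y) z = star x (star y z)) ∧
    (∀ x : G, star (skew a) x = x) ∧ (∀ x : G, star x (skew a) = x) ∧
    (∀ x : G, star (inv x) x = skew a) ∧ (∀ x : G, star x (inv x) = skew a) := by
  obtain ⟨m, rfl⟩ : ∃ m, n = m + 3 := ⟨n - 3, by omega⟩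
  obtain ⟨hassoc, huniq⟩ := h
  have e1 : m + 3 - 1 = m + 2 := rfl
  have e2 : m + 3 - 2 = m + 1 := rfl
  have e3 : m + 3 - 3 = m := rfl
  simp only [e1] at hskew
  simp only [e2] at hstar
  simp only [e3] at hinv
  have hone : 1 ≤ m + 3 := by omega
  have cons_rep : ∀ (k : ℕ) (y : G), y :: List.replicate k y = List.replicate (k + 1) y :=
    fun k y => List.replicate_succ.symm
  -- associativity of star
  have sassoc : ∀ x y z : G, star (star x y) z = star x (star y z) := by
    intro x y z
    have key := assoc_apply (n := m + 3) hassoc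
      [] (x :: (List.replicate (m+1) a ++ [y])) (List.replicate (m+1) a ++ [z])
      (x :: List.replicate (m+1) a) (y :: (List.replicate (m+1) a ++ [z])) []
      (by simp) (by simp) (by simp <;> omega)
      (by simp [List.append_assoc])
    rw [← hstar, ← hstar] at key
    rw [hstar (star x y) z, hstar x (star y z)]
    simpa using key
  -- Dörnte's lemma
  have dornte : ∀ (x : G) (i j : ℕ), i + j = m + 2 →
      f (List.replicate i x ++ skew x :: List.replicate j x) = x := by
    intro x i j hij
    have key := assoc_apply (n := m + 3) hassoc
      (List.replicate i x) (List.replicate (m+2) x ++ [skew x]) (List.replicate j x)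
      (List.replicate (m+2) x) (List.replicate i x ++ skew x :: List.replicate j x) []
      (by simp) (by simp <;> omega) (by simp <;> omega)
      (by
        simp only [List.append_assoc, List.singleton_append, List.append_nil,
          List.cons_append]
        exact rep_comm x i (m+2) _)
    rw [hskew x] at key
    have l1 : List.replicate i x ++ x :: List.replicate j x
        = List.replicate (m+3) x := by
      rw [cons_rep, ← List.replicate_add]
      congr 1
      omega
    have l2 : List.replicate (m+2) x ++ [x] = List.replicate (m+3) x := by
      rw [show [x] = List.replicate 1 x from rfl, ← List.replicate_add]
    rw [l1, ← l2] at key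
    exact (cancel_last hone huniq _ (by simp) key).symm
  -- left identity
  have lid : ∀ x : G, star (skew a) x = x := by
    intro x
    have key := assoc_apply (n := m + 3) hassoc
      [] (List.replicate (m+2) a ++ [skew a]) (List.replicate (m+1) a ++ [x])
      (List.replicate (m+2) a) (skew a :: (List.replicate (m+1) a ++ [x])) []
      (by simp) (by simp) (by simp <;> omega)
      (by simp [List.append_assoc])
    rw [hskew a, ← hstar] at key
    have l1 : a :: (List.replicate (m+1) a ++ [x])
        = List.replicate (m+2) a ++ [x] := by
      rw [← List.cons_append, cons_rep]
    rw [show ([] : List G) ++ a :: (List.replicate (m+1) a ++ [x])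
        = a :: (List.replicate (m+1) a ++ [x]) from rfl, l1] at key
    have := cancel_last hone huniq (List.replicate (m+2) a) (by simp) (by simpa using key)
    exact this.symm
  -- left inverse
  have linv : ∀ x : G, star (inv x) x = skew a := by
    intro x
    have keyA := assoc_apply (n := m + 3) hassoc
      [] (skew a :: (List.replicate m x ++ [skew x, skew a])) (List.replicate (m+1) a ++ [x])
      (skew a :: (List.replicate m x ++ [skew x])) (skew a :: (List.replicate (m+1) a ++ [x])) []
      (by simp) (by simp) (by simp <;> omega)
      (by simp [List.append_assoc])
    rw [← hinv, ← hstar, lid] at keyA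
    -- keyA : f (inv x :: (rep(m+1) a ++ [x])) = f ((ā :: (rep m x ++ [x̄])) ++ [x])
    have keyB := assoc_apply (n := m + 3) hassoc
      [] (skew a :: (List.replicate m x ++ [skew x, x])) (List.replicate (m+2) x)
      [skew a] (List.replicate m x ++ skew x :: List.replicate 2 x) (List.replicate (m+1) x)
      (by simp) (by simp <;> omega) (by simp <;> omega)
      (by
        simp only [List.nil_append, List.append_nil, List.cons_append,
          List.append_assoc, List.singleton_append, List.nil_append]
        congr 2)
    rw [dornte x m 2 rfl] at keyB
    simp only [List.nil_append] at keyA keyB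
    have lA : (skew a :: (List.replicate m x ++ [skew x])) ++ [x]
        = skew a :: (List.replicate m x ++ [skew x, x]) := by
      simp
    rw [lA] at keyA
    have lB : ([skew a] : List G) ++ x :: List.replicate (m+1) x
        = skew a :: List.replicate (m+2) x := by
      rw [cons_rep]; rfl
    rw [lB] at keyB
    have hy : f (skew a :: (List.replicate m x ++ [skew x, x])) = skew a :=
      cancel_first hone huniq (List.replicate (m+2) x) (by simp) (by simpa using keyB)
    rw [hstar, keyA, hy]
  -- right inverse
  have rinv : ∀ x : G, star x (inv x) = skew a := by
    intro x
    have h1 : star (inv (inv x)) (star (inv x) (star x (inv x))) = star x (inv x) := by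
      rw [← sassoc, linv, lid]
    have h2 : star (inv (inv x)) (star (inv x) (star x (inv x))) = skew a := by
      rw [show star (inv x) (star x (inv x)) = inv x from by rw [← sassoc, linv, lid], linv]
    exact h1.symm.trans h2
  -- right identity
  have rid : ∀ x : G, star x (skew a) = x := by
    intro x
    calc star x (skew a) = star x (star (inv x) x) := by rw [linv]
      _ = star (star x (inv x)) x := (sassoc ..).symm
      _ = star (skew a) x := by rw [rinv]
      _ = x := lid x
  exact ⟨sassoc, lid, rid, linv, rinv⟩
end

section
/- Let (G,f) be an n-ary group and let a, c ∈ G. Then the retracts ret_a(G,f) and ret_c(G,f) are isomorphic as groups. -/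
private theorem assoc_aux {G : Type*} {n : ℕ} (hn : 3 ≤ n) {f : List G → G}
    (hf : IsNAryAssoc n f) {w1 w2 : List G} (hw1 : w1.length = n - 2)
    (hw2 : w2.length = n - 2) (u x y : G) :
    f ((f (u :: w1 ++ [x])) :: w2 ++ [y]) = f (u :: w1 ++ [f (x :: w2 ++ [y])]) := by
  set s : List G := u :: w1 ++ x :: w2 ++ [y] with hs
  have hsplit1 : s = (u :: w1 ++ [x]) ++ (w2 ++ [y]) := by simp [hs]
  have hsplit2 : s = (u :: w1) ++ (x :: w2 ++ [y]) := by simp [hs]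
  have hlen : s.length = 2 * n - 1 := by simp [hs, hw1, hw2]; omega
  have key := hf s 0 (n - 1) hlen (by omega) (by omega)
  have h1 : s.take n = u :: w1 ++ [x] := by
    rw [hsplit1]; exact List.take_left' (by simp [hw1]; omega)
  have h2 : s.drop n = w2 ++ [y] := by
    rw [hsplit1]; exact List.drop_left' (by simp [hw1]; omega)
  have h3 : s.take (n - 1) = u :: w1 := by
    rw [hsplit2]; exact List.take_left' (by simp [hw1]; omega)
  have h4 : s.drop (n - 1) = x :: w2 ++ [y] := by
    rw [hsplit2]; exact List.drop_left' (by simp [hw1]; omega)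
  have h5 : (x :: w2 ++ [y]).take n = x :: w2 ++ [y] :=
    List.take_of_length_le (by simp [hw2]; omega)
  have h6 : s.drop (n - 1 + n) = [] := List.drop_eq_nil_of_le (by omega)
  simp only [List.take_zero, List.drop_zero, zero_add, List.nil_append, h1, h2, h3, h4,
    h5, h6] at key
  simpa using key

private theorem sol_right_aux {G : Type*} {n : ℕ} (hn : 3 ≤ n) {f : List G → G}
    (hs : NAryUniqueSolutions n f) {w : List G} (hw : w.length = n - 2) (b t : G) :
    ∃! z : G, f (b :: w ++ [z]) = t := by
  have key := hs (b :: w ++ [b]) (n - 1) (by simp [hw]; omega) (by omega) t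
  have h1 : (b :: w ++ [b]).take (n - 1) = b :: w := by
    have : b :: w ++ [b] = (b :: w) ++ [b] := by simp
    rw [this]; exact List.take_left' (by simp [hw]; omega)
  have h2 : (b :: w ++ [b]).drop (n - 1 + 1) = [] :=
    List.drop_eq_nil_of_le (by simp [hw]; omega)
  simp only [h1, h2] at key
  simpa using key

private theorem sol_left_aux {G : Type*} {n : ℕ} (hn : 3 ≤ n) {f : List G → G}
    (hs : NAryUniqueSolutions n f) {w : List G} (hw : w.length = n - 2) (b t : G) :
    ∃! z : G, f (z :: w ++ [b]) = t := by
  have key := hs (b :: w ++ [b]) 0 (by simp [hw]; omega) (by omega) t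
  have h2 : (b :: w ++ [b]).drop (0 + 1) = w ++ [b] := by simp
  simp only [List.take_zero, List.nil_append, h2] at key
  exact key

private theorem iso_of_ops {G : Type*} (s t : G → G → G) (a : G)
    (h1 : ∀ x y z, s (s x y) z = s x (s y z))
    (h2 : ∀ x y z, t (s x y) z = s x (t y z))
    (h3 : ∀ x y z, s (t x y) z = t x (s y z))
    (hL : ∀ b u : G, ∃! z, s b z = u)
    (hR : ∀ b u : G, ∃! z, s z b = u) :
    ∃ e : G ≃ G, ∀ x y, e (s x y) = t (e x) (e y) := by
  obtain ⟨e0, he0, -⟩ := hL a a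
  have hrid : ∀ u, s u e0 = u := by
    intro u
    obtain ⟨z, hz, -⟩ := hR a u
    calc s u e0 = s (s z a) e0 := by rw [hz]
      _ = s z (s a e0) := h1 _ _ _
      _ = s z a := by rw [he0]
      _ = u := hz
  obtain ⟨e1, he1, -⟩ := hR a a
  have hlid1 : ∀ u, s e1 u = u := by
    intro u
    obtain ⟨z, hz, -⟩ := hL a u
    calc s e1 u = s e1 (s a z) := by rw [hz]
      _ = s (s e1 a) z := (h1 _ _ _).symm
      _ = s a z := by rw [he1]
      _ = u := hz
  have hee : e1 = e0 := by
    have := hlid1 e0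
    rw [← this, hrid e1]
  have hlid : ∀ u, s e0 u = u := hee ▸ hlid1
  obtain ⟨g, hg, -⟩ := hL a (t a e0)
  have claim : ∀ x y, t x y = s x (s g y) := by
    intro x y
    obtain ⟨w, hw, -⟩ := hR a x
    have ha : t a y = s a (s g y) := by
      calc t a y = t a (s e0 y) := by rw [hlid]
        _ = s (t a e0) y := (h3 _ _ _).symm
        _ = s (s a g) y := by rw [hg]
        _ = s a (s g y) := h1 _ _ _
    calc t x y = t (s w a) y := by rw [hw]
      _ = s w (t a y) := h2 _ _ _
      _ = s w (s a (s g y)) := by rw [ha]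
      _ = s (s w a) (s g y) := (h1 _ _ _).symm
      _ = s x (s g y) := by rw [hw]
  obtain ⟨g', hg', -⟩ := hL g e0
  have hg'g : s g' g = e0 := by
    obtain ⟨g'', hg'', -⟩ := hR g e0
    have : g'' = g' := by
      calc g'' = s g'' e0 := (hrid _).symm
        _ = s g'' (s g g') := by rw [hg']
        _ = s (s g'' g) g' := (h1 _ _ _).symm
        _ = s e0 g' := by rw [hg'']
        _ = g' := hlid _
    rw [← this]; exact hg''
  have hinj : Function.Injective (fun x => s x g') := by
    intro x y hxy
    simp only at hxy
    have : s (s x g') g = s (s y g') g := by rw [hxy]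
    rw [h1, h1, hg'g, hrid, hrid] at this
    exact this
  have hsurj : Function.Surjective (fun x => s x g') := by
    intro d
    exact ⟨s d g, by simp only; rw [h1, hg', hrid]⟩
  refine ⟨Equiv.ofBijective _ ⟨hinj, hsurj⟩, fun x y => ?_⟩
  show s (s x y) g' = t (s x g') (s y g')
  symm
  calc t (s x g') (s y g') = s (s x g') (s g (s y g')) := claim _ _
    _ = s (s x g') (s (s g y) g') := by rw [← h1 g y g']
    _ = s (s (s x g') (s g y)) g' := (h1 _ _ _).symm
    _ = s (s (s (s x g') g) y) g' := by rw [h1 (s x g') g y]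
    _ = s (s (s x (s g' g)) y) g' := by rw [h1 x g' g]
    _ = s (s x y) g' := by rw [hg'g, hrid]

/-- All retracts of an `n`-ary group are isomorphic: there is a bijection of `G`
carrying the retract operation over `a` to the retract operation over `c`. -/
theorem retracts_isomorphic {G : Type*} (n : ℕ) (hn : 3 ≤ n) (f : List G → G)
    (h : IsNAryGroup n f) (a c : G) :
    ∃ e : G ≃ G, ∀ x y : G,
      e (f (x :: (List.replicate (n - 2) a ++ [y]))) =
        f (e x :: (List.replicate (n - 2) c ++ [e y])) := by
  obtain ⟨hA, hS⟩ := h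
  have hwa : (List.replicate (n - 2) a).length = n - 2 := by simp
  have hwc : (List.replicate (n - 2) c).length = n - 2 := by simp
  exact iso_of_ops
    (fun x y => f (x :: (List.replicate (n - 2) a ++ [y])))
    (fun x y => f (x :: (List.replicate (n - 2) c ++ [y]))) a
    (fun x y z => assoc_aux hn hA hwa hwa x y z)
    (fun x y z => assoc_aux hn hA hwa hwc x y z)
    (fun x y z => assoc_aux hn hA hwc hwa x y z)
    (fun b u => sol_right_aux hn hS hwa b u)
    (fun b u => sol_left_aux hn hS hwa b u)
end

section
/- An n-ary group (G,f) is derived from an ordinary group (i.e., there is a group operation · on G with f(x₁,…,xₙ)=x₁·x₂⋯xₙ) if and only if G contains an n-ary identity: an element a such that f(a^{(i-1)}, x, a^{(n-i)}) = x for all x ∈ G and all 1 ≤ i ≤ n. -/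
/-- `(mul, e, inv)` is a group structure on `G`. -/
def IsGroupStr {G : Type*} (mul : G → G → G) (e : G) (inv : G → G) : Prop :=
  (∀ x y z : G, mul (mul x y) z = mul x (mul y z)) ∧
  (∀ x : G, mul e x = x) ∧ (∀ x : G, mul x e = x) ∧
  (∀ x : G, mul (inv x) x = e) ∧ (∀ x : G, mul x (inv x) = e)

/-- Auxiliary: applying the associativity law to an explicit decomposition of the
`(2n-1)`-sequence. -/
lemma nary_collapse {G : Type*} {n : ℕ} {f : List G → G} (hf : IsNAryAssoc n f)
    (u w t u' w' t' : List G)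
    (hw : w.length = n) (hw' : w'.length = n)
    (hlen : (u ++ w ++ t).length = 2 * n - 1)
    (heq : u ++ w ++ t = u' ++ w' ++ t') :
    f (u ++ f w :: t) = f (u' ++ f w' :: t') := by
  have hL : u.length + n ≤ (u ++ w ++ t).length := by
    simp only [List.length_append, hw]; omega
  have hL' : u'.length + n ≤ (u ++ w ++ t).length := by
    rw [heq]; simp only [List.length_append, hw']; omega
  have key := hf (u ++ w ++ t) u.length u'.length hlen hL hL'
  have e1 : (u ++ w ++ t).take u.length = u := by
    rw [List.append_assoc]; exact List.take_left
  have e2 : ((u ++ w ++ t).drop u.length).take n = w := by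
    rw [List.append_assoc, List.drop_left]
    exact List.take_left' hw
  have e3 : (u ++ w ++ t).drop (u.length + n) = t := by
    rw [List.drop_left']
    simp [hw]
  have e1' : (u ++ w ++ t).take u'.length = u' := by
    rw [heq, List.append_assoc]; exact List.take_left
  have e2' : ((u ++ w ++ t).drop u'.length).take n = w' := by
    rw [heq, List.append_assoc, List.drop_left]
    exact List.take_left' hw'
  have e3' : (u ++ w ++ t).drop (u'.length + n) = t' := by
    rw [heq, List.drop_left']
    simp [hw']
  rw [e1, e2, e3, e1', e2', e3'] at key
  exact key

theorem derived_iff_nary_identity {G : Type*} (n : ℕ) (hn : 3 ≤ n) (f : List G → G)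
    (h : IsNAryGroup n f) :
    (∃ (mul : G → G → G) (e : G) (inv : G → G), IsGroupStr mul e inv ∧
        ∀ l : List G, l.length = n → f l = l.foldr mul e) ↔
      ∃ a : G, ∀ (x : G) (i : ℕ), 1 ≤ i → i ≤ n →
        f (List.replicate (i - 1) a ++ x :: List.replicate (n - i) a) = x := by
  obtain ⟨hassoc, hsol⟩ := h
  constructor
  · rintro ⟨mul, e, inv, ⟨hasc, hle, hre, hli0, hri0⟩, hf⟩
    refine ⟨e, fun x i hi1 hin => ?_⟩
    have hrep : ∀ (k : ℕ) (c : G), List.foldr mul c (List.replicate k e) = c := by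
      intro k c; induction k with
      | zero => simp
      | succ k ih => simp [List.replicate_succ, ih, hle]
    have hlen : (List.replicate (i-1) e ++ x :: List.replicate (n-i) e).length = n := by
      simp; omega
    rw [hf _ hlen, List.foldr_append]
    simp [hrep, hre]
  · rintro ⟨a, ha⟩
    let mul : G → G → G := fun x y => f ([x] ++ List.replicate (n-2) a ++ [y])
    have hmul : ∀ x y, mul x y = f ([x] ++ List.replicate (n-2) a ++ [y]) := fun _ _ => rfl
    -- basic instances of the identity law
    have hid1 : ∀ x, f ([x] ++ List.replicate (n-1) a) = x := by
      intro x
      have := ha x 1 le_rfl (by omega)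
      simpa using this
    have hidn : ∀ x, f (List.replicate (n-1) a ++ [x]) = x := by
      intro x
      have := ha x n (by omega) le_rfl
      simpa using this
    have hidn1 : ∀ x, f (List.replicate (n-2) a ++ [x] ++ [a]) = x := by
      intro x
      have := ha x (n-1) (by omega) (by omega)
      have h1 : n - 1 - 1 = n - 2 := by omega
      have h2 : n - (n-1) = 1 := by omega
      rw [h1, h2] at this
      simpa using this
    have hrep1 : [a] ++ List.replicate (n-2) a = List.replicate (n-1) a := by
      have : n - 1 = (n-2) + 1 := by omega
      rw [this, List.replicate_succ]; rfl
    have hrep2 : List.replicate (n-2) a ++ [a] = List.replicate (n-1) a := by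
      have : n - 1 = (n-2) + 1 := by omega
      rw [this, List.replicate_succ']
    have hea : ∀ y, mul a y = y := by
      intro y; rw [hmul, hrep1]; exact hidn y
    have hae : ∀ x, mul x a = x := by
      intro x; rw [hmul, List.append_assoc, hrep2]
      exact hid1 x
    -- associativity
    have hasc : ∀ x y z, mul (mul x y) z = mul x (mul y z) := by
      intro x y z
      have := nary_collapse hassoc
        [] ([x] ++ List.replicate (n-2) a ++ [y]) (List.replicate (n-2) a ++ [z])
        ([x] ++ List.replicate (n-2) a) ([y] ++ List.replicate (n-2) a ++ [z]) []
        (by simp; omega) (by simp; omega) (by simp; omega)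
        (by simp [List.append_assoc])
      simpa [hmul, List.append_assoc] using this
    -- left inverse
    have hinv : ∀ y, ∃ z, mul z y = a := by
      intro y
      obtain ⟨z, hz, -⟩ := hsol (a :: (List.replicate (n-2) a ++ [y])) 0
        (by simp; omega) (by omega) a
      refine ⟨z, ?_⟩
      rw [hmul]
      simpa using hz
    let linv : G → G := fun y => Classical.choose (hinv y)
    have hli : ∀ y, mul (linv y) y = a := fun y => Classical.choose_spec (hinv y)
    have hri : ∀ x, mul x (linv x) = a := by
      intro x
      have h1 := hli x
      have h2 := hli (linv x)
      calc mul x (linv x) = mul a (mul x (linv x)) := (hea _).symm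
        _ = mul (mul (linv (linv x)) (linv x)) (mul x (linv x)) := by rw [h2]
        _ = mul (linv (linv x)) (mul (mul (linv x) x) (linv x)) := by
              rw [hasc, ← hasc (linv x) x (linv x)]
        _ = mul (linv (linv x)) (mul a (linv x)) := by rw [h1]
        _ = mul (linv (linv x)) (linv x) := by rw [hea]
        _ = a := h2
    -- the step lemma
    have hstep : ∀ (u : List G) (y P : G) (m : ℕ), u.length + m + 2 = n →
        f (u ++ [y] ++ [P] ++ List.replicate m a) =
        f (u ++ [mul y P] ++ List.replicate (m+1) a) := by
      intro u y P m hum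
      have key := nary_collapse hassoc
        (u ++ [y]) (List.replicate (n-2) a ++ [P] ++ [a]) (List.replicate m a)
        u ([y] ++ List.replicate (n-2) a ++ [P]) (List.replicate (m+1) a)
        (by simp; omega) (by simp; omega) (by simp; omega)
        (by
          have : List.replicate (m+1) a = [a] ++ List.replicate m a := by
            simp [List.replicate_succ]
          rw [this]; simp [List.append_assoc])
      rw [hidn1 P] at key
      have hw' : f ([y] ++ List.replicate (n-2) a ++ [P]) = mul y P := (hmul y P).symm
      rw [hw'] at key
      simpa [List.append_assoc] using key
    -- the fold lemma
    have hfold : ∀ (v : List G) (P : G), v.length + 1 ≤ n →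
        f (v ++ [P] ++ List.replicate (n - v.length - 1) a) = v.foldr mul P := by
      intro v
      induction v using List.reverseRecOn with
      | nil => intro P _; simpa using hid1 P
      | append_singleton u y ih =>
        intro P hlen
        have hu : u.length + 1 ≤ n := by simp at hlen; omega
        have hm : u.length + (n - u.length - 2) + 2 = n := by simp at hlen; omega
        have e1 : n - (u ++ [y]).length - 1 = n - u.length - 2 := by simp; omega
        have e2 : n - u.length - 2 + 1 = n - u.length - 1 := by simp at hlen; omega
        rw [e1]
        have step := hstep u y P (n - u.length - 2) hm
        rw [e2] at step
        have ihh := ih (mul y P) hu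
        calc f ((u ++ [y]) ++ [P] ++ List.replicate (n - u.length - 2) a)
            = f (u ++ [y] ++ [P] ++ List.replicate (n - u.length - 2) a) := rfl
          _ = f (u ++ [mul y P] ++ List.replicate (n - u.length - 1) a) := step
          _ = u.foldr mul (mul y P) := ihh
          _ = (u ++ [y]).foldr mul P := by rw [List.foldr_append]; rfl
    refine ⟨mul, a, linv, ⟨hasc, hea, hae, hli, hri⟩, ?_⟩
    intro l hl
    have hne : l ≠ [] := by intro hc; rw [hc] at hl; simp at hl; omega
    obtain ⟨v, P, rfl⟩ : ∃ v P, l = v ++ [P] :=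
      ⟨l.dropLast, l.getLast hne, (List.dropLast_append_getLast hne).symm⟩
    have hv : v.length + 1 = n := by simpa using hl
    have hmain := hfold v P (by omega)
    have hz : n - v.length - 1 = 0 := by omega
    rw [hz] at hmain
    simp only [List.replicate_zero, List.append_nil] at hmain
    rw [List.foldr_append]
    simpa [hae] using hmain
end

section
/- Hosszú–Gloskin theorem: Let (G,f) be an n-ary group. Then there exist a group operation · on G, an automorphism θ of (G,·), and an element b ∈ G such that (1) θ(b) = b, (2) θ^{n-1}(x) = b·x·b⁻¹ for all x ∈ G, and (3) f(x₁,…,xₙ) = x₁·θ(x₂)·θ²(x₃)⋯θ^{n-1}(xₙ)·b for all x₁,…,xₙ ∈ G. -/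
section Helpers

variable {G : Type*} {n : ℕ} {f : List G → G}

private lemma take_drop_spec (p q r : List G) (hq : q.length = n) :
    (p ++ (q ++ r)).take p.length = p ∧ ((p ++ (q ++ r)).drop p.length).take n = q ∧
    (p ++ (q ++ r)).drop (p.length + n) = r := by
  refine ⟨List.take_left, ?_, ?_⟩
  · rw [List.drop_left, ← hq, List.take_left]
  · rw [← List.drop_drop, List.drop_left, ← hq, List.drop_left]

private lemma assoc_apply_s7 (hA : IsNAryAssoc n f) (p q r p' q' r' : List G)
    (hq : q.length = n) (hq' : q'.length = n)
    (hlen : p.length + q.length + r.length = 2 * n - 1)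
    (heq : p ++ (q ++ r) = p' ++ (q' ++ r')) :
    f (p ++ f q :: r) = f (p' ++ f q' :: r') := by
  have hlen' : (p ++ (q ++ r)).length = 2 * n - 1 := by
    simp only [List.length_append]; omega
  have h1 := take_drop_spec p q r hq
  have h2 := take_drop_spec p' q' r' hq'
  rw [← heq] at h2
  have key := hA (p ++ (q ++ r)) p.length p'.length hlen' (by omega)
    (by have : p'.length + q'.length + r'.length = 2*n-1 := by
          have := congrArg List.length heq
          simp only [List.length_append] at this ⊢; omega
        omega)
  rwa [h1.1, h1.2.1, h1.2.2, h2.1, h2.2.1, h2.2.2] at key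

private lemma unique_sol (hU : NAryUniqueSolutions n f) {p q : List G}
    (hpq : p.length + q.length + 1 = n) (c : G) :
    ∃! x : G, f (p ++ x :: q) = c := by
  have key := hU (p ++ c :: q) p.length (by simp; omega) (by omega) c
  have h1 : (p ++ c :: q).take p.length = p := List.take_left
  have h2 : (p ++ c :: q).drop (p.length + 1) = q := by
    rw [← List.drop_drop, List.drop_left]; rfl
  rwa [h1, h2] at key

end Helpers

/-- Hosszú–Gloskin theorem. -/
theorem hosszu_gloskin {G : Type*} (n : ℕ) (hn : 3 ≤ n) (f : List G → G)
    (h : IsNAryGroup n f) :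
    ∃ (mul : G → G → G) (e : G) (inv : G → G) (θ : G → G) (b : G),
      IsGroupStr mul e inv ∧
      Function.Bijective θ ∧ (∀ x y : G, θ (mul x y) = mul (θ x) (θ y)) ∧
      θ b = b ∧
      (∀ x : G, θ^[n - 1] x = mul (mul b x) (inv b)) ∧
      (∀ l : List G, l.length = n → f l = (l.mapIdx fun i x => θ^[i] x).foldr mul b) := by
  obtain ⟨hA, hU⟩ := h
  classical
  set a : G := f [] with ha
  -- replicate helpers
  have hra : List.replicate (n-1) a = List.replicate (n-2) a ++ [a] := by
    rw [show n-1 = (n-2)+1 by omega, List.replicate_succ']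
  -- the identity element
  obtain ⟨e, he⟩ := (unique_sol hU (p := List.replicate (n-1) a) (q := [])
    (by simp; omega) a).exists
  obtain ⟨e', he'⟩ := (unique_sol hU (p := []) (q := List.replicate (n-1) a)
    (by simp; omega) a).exists
  rw [List.nil_append] at he'
  set op : G → G → G := fun x y => f (x :: (List.replicate (n-2) a ++ [y])) with hop
  have opdef : ∀ x y, op x y = f (x :: (List.replicate (n-2) a ++ [y])) := fun _ _ => rfl
  -- right identity
  have hre : ∀ x, op x e = x := by
    intro x
    obtain ⟨y, hy⟩ := (unique_sol hU (p := []) (q := List.replicate (n-1) a)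
      (by simp; omega) x).exists
    rw [List.nil_append] at hy
    have A := assoc_apply_s7 hA [] (y :: List.replicate (n-1) a)
      (List.replicate (n-2) a ++ [e])
      (y :: List.replicate (n-2) a) (List.replicate (n-1) a ++ [e]) []
      (by simp; omega) (by simp; omega) (by simp; omega)
      (by simp only [List.nil_append, List.append_nil, List.cons_append,
            List.append_assoc]
          congr 1
          rw [← List.append_assoc, ← List.append_assoc, ← List.replicate_add,
            ← List.replicate_add, Nat.add_comm])
    rw [List.nil_append, hy, he] at A
    rw [opdef, A]
    refine (congrArg f ?_).trans hy
    rw [hra]; simp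
  -- left identity for e'
  have hle' : ∀ x, op e' x = x := by
    intro x
    obtain ⟨y, hy⟩ := (unique_sol hU (p := List.replicate (n-1) a) (q := [])
      (by simp; omega) x).exists
    have A := assoc_apply_s7 hA [] (e' :: List.replicate (n-1) a)
      (List.replicate (n-2) a ++ [y])
      (e' :: List.replicate (n-2) a) (List.replicate (n-1) a ++ [y]) []
      (by simp; omega) (by simp; omega) (by simp; omega)
      (by simp only [List.nil_append, List.append_nil, List.cons_append,
            List.append_assoc]
          congr 1
          rw [← List.append_assoc, ← List.append_assoc, ← List.replicate_add,
            ← List.replicate_add, Nat.add_comm])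
    rw [List.nil_append, he', hy] at A
    rw [opdef]
    have A2 : f (a :: (List.replicate (n-2) a ++ [y])) = x := by
      refine (congrArg f ?_).trans hy
      rw [show n-1 = 1+(n-2) by omega, List.replicate_add]; simp
    exact (congrArg f (by simp : e' :: (List.replicate (n-2) a ++ [x]) =
      (e' :: List.replicate (n-2) a) ++ [x])).trans (A.symm.trans A2)
  have hee : e' = e := by rw [← hre e', hle' e]
  have hle : ∀ x, op e x = x := hee ▸ hle'
  -- associativity
  have hassoc : ∀ x y z, op (op x y) z = op x (op y z) := by
    intro x y z
    have A := assoc_apply_s7 hA [] (x :: (List.replicate (n-2) a ++ [y]))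
      (List.replicate (n-2) a ++ [z])
      (x :: List.replicate (n-2) a) (y :: (List.replicate (n-2) a ++ [z])) []
      (by simp; omega) (by simp; omega) (by simp; omega)
      (by simp)
    rw [List.nil_append] at A
    rw [opdef (op x y) z, opdef x (op y z), opdef x y, opdef y z]
    exact A.trans (congrArg f (by simp))
  -- inverses
  have hinvex : ∀ x, ∃ z, op x z = e := by
    intro x
    obtain ⟨z, hz⟩ := (unique_sol hU (p := x :: List.replicate (n-2) a) (q := [])
      (by simp; omega) e).exists
    exact ⟨z, by rw [opdef]; simpa using hz⟩
  choose inv hinvr using hinvex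
  have hinvl : ∀ x, op (inv x) x = e := by
    intro x
    obtain ⟨w, hw⟩ := (unique_sol hU (p := []) (q := List.replicate (n-2) a ++ [x])
      (by simp; omega) e).exists
    rw [List.nil_append] at hw
    have hwx : op w x = e := by rw [opdef]; simpa using hw
    have : w = inv x := by
      rw [← hre w, ← hinvr x, ← hassoc, hwx, hle]
    rwa [this] at hwx
  -- group utilities
  have hu1 : ∀ z y, op (op z y) (inv y) = z := fun z y => by rw [hassoc, hinvr, hre]
  have hu2 : ∀ z y, op (op z (inv y)) y = z := fun z y => by rw [hassoc, hinvl, hre]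
  -- right translation lemma
  have htr : ∀ (p : List G) (z y : G), p.length = n - 1 →
      op (f (p ++ [z])) y = f (p ++ [op z y]) := by
    intro p z y hp
    have A := assoc_apply_s7 hA [] (p ++ [z]) (List.replicate (n-2) a ++ [y])
      p (z :: (List.replicate (n-2) a ++ [y])) []
      (by simp; omega) (by simp; omega) (by simp; omega) (by simp)
    rw [List.nil_append] at A
    rw [opdef, A, ← opdef]
  -- left translation lemma
  have htl : ∀ (z c : G) (l : List G), l.length = n - 1 →
      op z (f (c :: l)) = f (op z c :: l) := by
    intro z c l hl
    have A := assoc_apply_s7 hA (z :: List.replicate (n-2) a) (c :: l) []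
      [] (z :: (List.replicate (n-2) a ++ [c])) l
      (by simp; omega) (by simp; omega) (by simp; omega) (by simp)
    rw [List.nil_append] at A
    rw [opdef z (f (c :: l)), opdef z c]
    exact (congrArg f (by simp)).trans A
  -- the distinguished element b and maps lam, θ
  set b : G := f (List.replicate n e) with hb
  set lam : G → G := fun x => f (e :: x :: List.replicate (n-2) e) with hlam
  have lamdef : ∀ x, lam x = f (e :: x :: List.replicate (n-2) e) := fun _ => rfl
  set θ : G → G := fun x => op (lam x) (inv b) with hθ
  have θdef : ∀ x, θ x = op (lam x) (inv b) := fun _ => rfl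
  have hrepe1 : List.replicate (n-1) e = e :: List.replicate (n-2) e := by
    rw [show n-1 = (n-2)+1 by omega, List.replicate_succ]
  have hrepe : List.replicate n e = e :: List.replicate (n-1) e := by
    conv_lhs => rw [show n = (n-1)+1 by omega]
    rw [List.replicate_succ]
  have hrepe' : List.replicate n e = List.replicate (n-1) e ++ [e] := by
    conv_lhs => rw [show n = (n-1)+1 by omega]
    rw [List.replicate_succ']
  have g0 : ∀ z, f (z :: List.replicate (n-1) e) = op z b := by
    intro z
    rw [hb, hrepe, htl z e (List.replicate (n-1) e) (by simp), hre]
  have hbx : ∀ x, f (List.replicate (n-1) e ++ [x]) = op b x := by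
    intro x
    rw [hb, hrepe', htr (List.replicate (n-1) e) e x (by simp), hle]
  have lamθ : ∀ x, f (θ x :: List.replicate (n-1) e) = lam x := by
    intro x; rw [g0, θdef, hu2]
  -- the auxiliary neutralizing element z0
  obtain ⟨z0, hz0⟩ := (unique_sol hU (p := List.replicate (n-2) e) (q := [e])
    (by simp; omega) e).exists
  have hNE : ∀ c, f (List.replicate (n-2) e ++ [z0, c]) = c := by
    intro c
    have T := htr (List.replicate (n-2) e ++ [z0]) e c (by simp; omega)
    rw [hle] at T
    have w1 : (List.replicate (n-2) e ++ [z0]) ++ [e] = List.replicate (n-2) e ++ [z0, e] := by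
      simp
    have w2 : (List.replicate (n-2) e ++ [z0]) ++ [c] = List.replicate (n-2) e ++ [z0, c] := by
      simp
    rw [w1, w2] at T
    rw [← T, hz0, hle]
  -- the key swap lemma
  have hswap : ∀ (u t : List G) (x c : G), u.length + t.length = n - 3 →
      f (u ++ e :: x :: c :: t) = f (u ++ θ x :: e :: c :: t) := by
    intro u t x c hut
    have A1 := assoc_apply_s7 hA u (e :: x :: List.replicate (n-2) e) (z0 :: c :: t)
      (u ++ [e, x]) (List.replicate (n-2) e ++ [z0, c]) t
      (by simp; omega) (by simp; omega) (by simp; omega) (by simp)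
    have A2 := assoc_apply_s7 hA u (θ x :: List.replicate (n-1) e) (z0 :: c :: t)
      (u ++ [θ x, e]) (List.replicate (n-2) e ++ [z0, c]) t
      (by simp; omega) (by simp; omega) (by simp; omega)
      (by rw [hrepe1]; simp)
    rw [hNE c] at A1 A2
    rw [lamθ x] at A2
    rw [← lamdef] at A1
    have key := A1.symm.trans A2
    calc f (u ++ e :: x :: c :: t) = f ((u ++ [e, x]) ++ c :: t) := congrArg f (by simp)
      _ = f ((u ++ [θ x, e]) ++ c :: t) := key
      _ = f (u ++ θ x :: e :: c :: t) := congrArg f (by simp)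
  -- move-to-front lemma
  have hMTF : ∀ (k : ℕ) (x c : G) (t : List G), k + 2 + t.length = n →
      f (List.replicate k e ++ x :: c :: t)
        = f (θ^[k] x :: (List.replicate k e ++ c :: t)) := by
    intro k
    induction k with
    | zero => intro x c t hk; simp
    | succ k ih =>
      intro x c t hk
      have w1 : List.replicate (k+1) e ++ x :: c :: t
          = List.replicate k e ++ e :: x :: c :: t := by
        rw [List.replicate_succ']; simp
      rw [w1, hswap (List.replicate k e) t x c (by simp; omega)]
      rw [ih (θ x) e (c :: t) (by simp at hk ⊢; omega), ← Function.iterate_succ_apply]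
      exact congrArg f (by rw [List.replicate_succ']; simp)
  -- homomorphism property
  have hra2 : List.replicate (n-2) a = List.replicate (n-3) a ++ [a] := by
    rw [show n-2 = (n-3)+1 by omega, List.replicate_succ']
  have hlam_op : ∀ x y, lam (op x y) = op (θ x) (lam y) := by
    intro x y
    have A := assoc_apply_s7 hA [e] (x :: (List.replicate (n-2) a ++ [y]))
      (List.replicate (n-2) e)
      ([e, x] ++ List.replicate (n-3) a) (a :: y :: List.replicate (n-2) e) []
      (by simp; omega) (by simp; omega) (by simp; omega)
      (by rw [hra2]; simp)
    have C := assoc_apply_s7 hA [θ x] (e :: (List.replicate (n-2) a ++ [y]))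
      (List.replicate (n-2) e)
      ([θ x, e] ++ List.replicate (n-3) a) (a :: y :: List.replicate (n-2) e) []
      (by simp; omega) (by simp; omega) (by simp; omega)
      (by rw [hra2]; simp)
    rw [List.singleton_append, ← opdef x y, ← lamdef] at A
    rw [List.singleton_append, ← opdef e y, hle y] at C
    set Z : G := f (a :: y :: List.replicate (n-2) e) with hZ
    obtain ⟨c, t, hct, hctlen⟩ :
        ∃ c t, List.replicate (n-3) a ++ [Z] = c :: t ∧ t.length = n - 3 := by
      cases h' : List.replicate (n-3) a ++ [Z] with
      | nil => simp at h'
      | cons c t =>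
        refine ⟨c, t, rfl, ?_⟩
        have := congrArg List.length h'
        simp at this; omega
    have B := hswap [] t x c (by simp; omega)
    rw [List.nil_append, List.nil_append] at B
    have B' : f (([e, x] ++ List.replicate (n-3) a) ++ [Z])
        = f (([θ x, e] ++ List.replicate (n-3) a) ++ [Z]) := by
      calc f (([e, x] ++ List.replicate (n-3) a) ++ [Z])
          = f (e :: x :: c :: t) := congrArg f (by rw [← hct]; simp)
        _ = f (θ x :: e :: c :: t) := B
        _ = f (([θ x, e] ++ List.replicate (n-3) a) ++ [Z]) :=
            congrArg f (by rw [← hct]; simp)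
    have key : lam (op x y) = f (θ x :: y :: List.replicate (n-2) e) :=
      (A.trans (B'.trans C.symm))
    have fin : op (θ x) (lam y) = f (θ x :: y :: List.replicate (n-2) e) := by
      rw [lamdef y, htl (θ x) e (y :: List.replicate (n-2) e) (by simp; omega), hre]
    rw [key, fin]
  have hom : ∀ x y, θ (op x y) = op (θ x) (θ y) := by
    intro x y
    rw [θdef (op x y), hlam_op, hassoc, ← θdef]
  -- θ fixes b
  have hθb : θ b = b := by
    have A := assoc_apply_s7 hA [e] (List.replicate n e) (List.replicate (n-2) e)
      [] (List.replicate n e) (List.replicate (n-1) e)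
      (by simp) (by simp) (by simp; omega)
      (by rw [List.nil_append,
            show ([e] : List G) = List.replicate 1 e from (List.replicate_one).symm,
            ← List.replicate_add, ← List.replicate_add, ← List.replicate_add]
          congr 1
          omega)
    rw [List.singleton_append, List.nil_append, ← hb, ← lamdef, g0] at A
    rw [θdef, A, hu1]
  -- θ fixes e and inv b
  have hθe : θ e = e := by
    have h1 : lam e = b := by
      rw [lamdef, hb]
      exact congrArg f (by rw [hrepe, hrepe1])
    rw [θdef, h1, hinvr]
  have hθinvb : θ (inv b) = inv b := by
    have h1 := hom b (inv b)
    rw [hinvr, hθe, hθb] at h1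
    have h2 := congrArg (fun z => op (inv b) z) h1
    rw [hre, ← hassoc, hinvl, hle] at h2
    exact h2.symm
  -- the conjugation property
  have hconj : ∀ x, θ^[n-1] x = op (op b x) (inv b) := by
    intro x
    have hFx : f (List.replicate (n-2) e ++ [x, e]) = op (θ^[n-2] x) b := by
      rw [hMTF (n-2) x e [] (by simp; omega)]
      rw [show List.replicate (n-2) e ++ [e] = List.replicate (n-1) e from by
        rw [show n-1 = (n-2)+1 by omega, List.replicate_succ']]
      exact g0 _
    have hθ2 : θ^[n-2] x = op (f (List.replicate (n-2) e ++ [x, e])) (inv b) := by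
      rw [hFx, hu1]
    have hθF : θ (f (List.replicate (n-2) e ++ [x, e])) = op b x := by
      have A := assoc_apply_s7 hA [e] (List.replicate (n-2) e ++ [x, e])
        (List.replicate (n-2) e)
        [] (List.replicate (n-1) e ++ [x]) (List.replicate (n-1) e)
        (by simp; omega) (by simp; omega) (by simp; omega)
        (by rw [List.nil_append, hrepe1]; simp)
      rw [List.singleton_append, List.nil_append, hbx x, g0] at A
      rw [θdef, lamdef, A, hu1]
    rw [show n-1 = (n-2)+1 by omega, Function.iterate_succ_apply', hθ2, hom, hθF, hθinvb]
  -- bijectivity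
  have hsurj : Function.Surjective θ := by
    intro y
    refine ⟨θ^[n-2] (op (op (inv b) y) b), ?_⟩
    have h1 : θ (θ^[n-2] (op (op (inv b) y) b)) = θ^[n-1] (op (op (inv b) y) b) := by
      rw [show n-1 = (n-2)+1 by omega, Function.iterate_succ_apply']
    rw [h1, hconj]
    rw [← hassoc b, ← hassoc b, hinvr, hle, hu1]
  have hinj : Function.Injective θ := by
    intro x x' hxx
    have h1 : θ^[n-1] x = θ^[n-1] x' := by
      rw [show n-1 = (n-2)+1 by omega, Function.iterate_succ_apply,
        Function.iterate_succ_apply, hxx]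
    rw [hconj, hconj] at h1
    have h2 := congrArg (fun z => op (inv b) (op z b)) h1
    rw [hu2, hu2, ← hassoc, ← hassoc, hinvl, hle, hle] at h2
    exact h2
  -- the final formula
  have hFIN : ∀ (l : List G) (k : ℕ), k + l.length = n →
      f (List.replicate k e ++ l) = (l.mapIdx fun i x => θ^[k+i] x).foldr op b := by
    intro l
    induction l with
    | nil =>
      intro k hk
      have hkn : k = n := by simp at hk; omega
      subst hkn
      rw [List.append_nil, List.mapIdx_nil, List.foldr_nil, ← hb]
    | cons x rest ih =>
      intro k hk
      cases rest with
      | nil =>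
        have hk1 : k = n-1 := by simp at hk; omega
        subst hk1
        rw [hbx x]
        simp only [List.mapIdx_cons, List.mapIdx_nil, List.foldr_cons, List.foldr_nil,
          Nat.add_zero]
        rw [hconj x, hu2]
      | cons c t =>
        rw [hMTF k x c t (by simp at hk; omega)]
        have hpeel : f (θ^[k] x :: (List.replicate k e ++ c :: t))
            = op (θ^[k] x) (f (List.replicate (k+1) e ++ c :: t)) := by
          rw [List.replicate_succ, List.cons_append,
            htl (θ^[k] x) e (List.replicate k e ++ c :: t) (by simp at hk ⊢; omega), hre]
        rw [hpeel, ih (k+1) (by simp at hk ⊢; omega)]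
        simp only [List.mapIdx_cons, List.foldr_cons, Nat.add_zero]
        have hfn : (fun (i : ℕ) (y : G) => θ^[k+1+(i+1)] y)
            = (fun (i : ℕ) (y : G) => θ^[k+(i+1+1)] y) := by
          funext i y
          rw [show k+1+(i+1) = k+(i+1+1) by omega]
        rw [hfn]
  refine ⟨op, e, inv, θ, b, ⟨hassoc, hle, hre, hinvl, hinvr⟩, ⟨hinj, hsurj⟩, hom, hθb,
    hconj, ?_⟩
  intro l hl
  have := hFIN l 0 (by omega)
  simpa using this
end

section
/- Let F(X) be a free group on a set X, H a subgroup, and 𝒰 a right transversal of H with, for each w ∈ F(X), ŵ denoting the unique element of 𝒰 with Hw = Hŵ. Then the set { u·x·(ûx)⁻¹ : u ∈ 𝒰, x ∈ X, u·x·(ûx)⁻¹ ≠ 1 } generates H (and if 𝒰 is a Schreier transversal, it is a free basis of H). -/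
namespace NSAux

open FreeGroup

variable {X : Type*} [DecidableEq X]

def S (U : Set (FreeGroup X)) (hat : FreeGroup X → FreeGroup X) : Set (FreeGroup X) :=
  {g : FreeGroup X | (∃ u ∈ U, ∃ x : X,
    g = u * FreeGroup.of x * (hat (u * FreeGroup.of x))⁻¹) ∧ g ≠ 1}

variable (U : Set (FreeGroup X)) (hat : FreeGroup X → FreeGroup X)

/-- The rewriting letter. -/
noncomputable def t (hhatU : ∀ w, hat w ∈ U) (w : FreeGroup X) (x : X) :
    FreeGroup (S U hat) :=
  if h : hat w * FreeGroup.of x * (hat (hat w * FreeGroup.of x))⁻¹ = 1 then 1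
  else FreeGroup.of ⟨hat w * FreeGroup.of x * (hat (hat w * FreeGroup.of x))⁻¹,
    ⟨⟨hat w, hhatU w, x, rfl⟩, h⟩⟩

variable (hhatU : ∀ w, hat w ∈ U)

lemma t_congr {w w' : FreeGroup X} (h : hat w = hat w') (x : X) :
    t U hat hhatU w x = t U hat hhatU w' x := by
  simp only [t, h]

lemma t_eq_one {w : FreeGroup X} {x : X}
    (h : hat (hat w * FreeGroup.of x) = hat w * FreeGroup.of x) :
    t U hat hhatU w x = 1 :=
  dif_pos (by rw [h, mul_inv_cancel])

/-- one step of the rewriting automaton -/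
noncomputable def step (x : X) : Equiv.Perm (FreeGroup X × FreeGroup (S U hat)) where
  toFun p := (FreeGroup.of x * p.1, t U hat hhatU (p.1⁻¹ * (FreeGroup.of x)⁻¹) x * p.2)
  invFun p := ((FreeGroup.of x)⁻¹ * p.1, (t U hat hhatU p.1⁻¹ x)⁻¹ * p.2)
  left_inv := by
    rintro ⟨v, s⟩
    simp [mul_inv_rev, mul_assoc]
  right_inv := by
    rintro ⟨v, s⟩
    simp [mul_inv_rev, mul_assoc]

noncomputable def Phi : FreeGroup X →* Equiv.Perm (FreeGroup X × FreeGroup (S U hat)) :=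
  FreeGroup.lift fun x => step U hat hhatU x

lemma Phi_of_apply (x : X) (p : FreeGroup X × FreeGroup (S U hat)) :
    Phi U hat hhatU (FreeGroup.of x) p
      = (FreeGroup.of x * p.1, t U hat hhatU (p.1⁻¹ * (FreeGroup.of x)⁻¹) x * p.2) := by
  rw [Phi, FreeGroup.lift_apply_of]; rfl

lemma Phi_inv_of_apply (x : X) (p : FreeGroup X × FreeGroup (S U hat)) :
    Phi U hat hhatU (FreeGroup.of x)⁻¹ p
      = ((FreeGroup.of x)⁻¹ * p.1, (t U hat hhatU p.1⁻¹ x)⁻¹ * p.2) := by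
  rw [MonoidHom.map_inv, Phi, FreeGroup.lift_apply_of]; rfl

lemma Phi_fst (w : FreeGroup X) (p : FreeGroup X × FreeGroup (S U hat)) :
    (Phi U hat hhatU w p).1 = w * p.1 := by
  induction w using FreeGroup.induction_on generalizing p with
  | C1 => simp
  | of x => rw [Phi_of_apply]
  | inv_of x ih => rw [Phi_inv_of_apply]
  | mul a b iha ihb =>
    rw [MonoidHom.map_mul, Equiv.Perm.mul_apply, iha, ihb, mul_assoc]

lemma Phi_snd_mul (w : FreeGroup X) (v : FreeGroup X) (s : FreeGroup (S U hat)) :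
    (Phi U hat hhatU w (v, s)).2 = (Phi U hat hhatU w (v, 1)).2 * s := by
  induction w using FreeGroup.induction_on generalizing v s with
  | C1 => simp
  | of x =>
            rw [Phi_of_apply, Phi_of_apply]; simp [mul_assoc]
  | inv_of x ih =>
               rw [Phi_inv_of_apply, Phi_inv_of_apply]; simp [mul_assoc]
  | mul a b iha ihb =>
    rw [MonoidHom.map_mul, Equiv.Perm.mul_apply, Equiv.Perm.mul_apply]
    have h1 : Phi U hat hhatU b (v, s) = (b * v, (Phi U hat hhatU b (v, 1)).2 * s) := by
      rw [← ihb]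
      exact Prod.ext (Phi_fst U hat hhatU b (v, s)) rfl
    have h2 : Phi U hat hhatU b (v, 1) = (b * v, (Phi U hat hhatU b (v, 1)).2) := by
      exact Prod.ext (Phi_fst U hat hhatU b (v, 1)) rfl
    rw [h1, h2, iha, iha (b*v) ((Phi U hat hhatU b (v, 1)).2), mul_assoc]



section Main

variable {X : Type*} [DecidableEq X]
variable (H : Subgroup (FreeGroup X)) (U : Set (FreeGroup X)) (hat : FreeGroup X → FreeGroup X)

lemma hat_eq (hhatU : ∀ w, hat w ∈ U) (hhatH : ∀ w, w * (hat w)⁻¹ ∈ H)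
    (huniq : ∀ w, ∀ u ∈ U, w * u⁻¹ ∈ H → u = hat w)
    {a b : FreeGroup X} (h : a * b⁻¹ ∈ H) : hat a = hat b := by
  refine (huniq a (hat b) (hhatU b) ?_).symm
  have e : a * (hat b)⁻¹ = (a * b⁻¹) * (b * (hat b)⁻¹) := by group
  rw [e]; exact mul_mem h (hhatH b)

lemma hat_self (huniq : ∀ w, ∀ u ∈ U, w * u⁻¹ ∈ H → u = hat w)
    {u : FreeGroup X} (hu : u ∈ U) : hat u = u :=
  (huniq u u hu (by simp [one_mem])).symm

lemma Phi_snd_congr (hhatU : ∀ w, hat w ∈ U) (hhatH : ∀ w, w * (hat w)⁻¹ ∈ H)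
    (huniq : ∀ w, ∀ u ∈ U, w * u⁻¹ ∈ H → u = hat w) (w : FreeGroup X) :
    ∀ (v v' : FreeGroup X) (s : FreeGroup (S U hat)), v⁻¹ * v' ∈ H →
      (Phi U hat hhatU w (v, s)).2 = (Phi U hat hhatU w (v', s)).2 := by
  induction w using FreeGroup.induction_on with
  | C1 => intro v v' s h; rw [MonoidHom.map_one]; rfl
  | of x =>
    intro v v' s h
    rw [Phi_of_apply, Phi_of_apply]
    have : hat (v⁻¹ * (FreeGroup.of x)⁻¹) = hat (v'⁻¹ * (FreeGroup.of x)⁻¹) := by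
      refine hat_eq H U hat hhatU hhatH huniq ?_
      have e : v⁻¹ * (FreeGroup.of x)⁻¹ * (v'⁻¹ * (FreeGroup.of x)⁻¹)⁻¹ = v⁻¹ * v' := by group
      rw [e]; exact h
    rw [t_congr U hat hhatU this]
  | inv_of x _ =>
    intro v v' s h
    rw [Phi_inv_of_apply, Phi_inv_of_apply]
    have : hat (v⁻¹ : FreeGroup X) = hat (v'⁻¹) := by
      refine hat_eq H U hat hhatU hhatH huniq ?_
      have e : (v⁻¹ : FreeGroup X) * (v'⁻¹)⁻¹ = v⁻¹ * v' := by group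
      rw [e]; exact h
    rw [t_congr U hat hhatU this]
  | mul a b iha ihb =>
    intro v v' s h
    rw [MonoidHom.map_mul, Equiv.Perm.mul_apply, Equiv.Perm.mul_apply]
    have h1 : Phi U hat hhatU b (v, s) = (b * v, (Phi U hat hhatU b (v, s)).2) :=
      Prod.ext (Phi_fst U hat hhatU b (v, s)) rfl
    have h2 : Phi U hat hhatU b (v', s) = (b * v', (Phi U hat hhatU b (v', s)).2) :=
      Prod.ext (Phi_fst U hat hhatU b (v', s)) rfl
    rw [h1, h2, ihb v v' s h]
    refine iha (b * v) (b * v') _ ?_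
    have e : (b * v)⁻¹ * (b * v') = v⁻¹ * v' := by group
    rw [e]; exact h

lemma mk_single_false (x : X) :
    FreeGroup.mk [(x, false)] = (FreeGroup.of x)⁻¹ := by
  rw [FreeGroup.of, FreeGroup.inv_mk]; rfl

lemma traverse (hhatU : ∀ w, hat w ∈ U) (hhatH : ∀ w, w * (hat w)⁻¹ ∈ H)
    (huniq : ∀ w, ∀ u ∈ U, w * u⁻¹ ∈ H → u = hat w) (l : List (X × Bool)) (hl : ∀ k, FreeGroup.mk (l.take k) ∈ U) :
    ∀ (b : FreeGroup X) (s : FreeGroup (S U hat)), b⁻¹ * (FreeGroup.mk l)⁻¹ ∈ H →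
      Phi U hat hhatU (FreeGroup.mk l) (b, s) = (FreeGroup.mk l * b, s) := by
  induction l using List.reverseRecOn with
  | nil =>
    intro b s hb
    have h1 : FreeGroup.mk ([] : List (X × Bool)) = 1 := (FreeGroup.one_eq_mk).symm
    rw [h1, MonoidHom.map_one, one_mul]; rfl
  | append_singleton l' a ih =>
    obtain ⟨x, bb⟩ := a
    intro b s hb
    have hl' : ∀ k, FreeGroup.mk (l'.take k) ∈ U := by
      intro k
      rcases le_or_gt k l'.length with hk | hk
      · have := hl k
        rwa [List.take_append_of_le_length hk] at this
      · rw [List.take_of_length_le hk.le]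
        have := hl l'.length
        rwa [List.take_left] at this
    have hml' : FreeGroup.mk l' ∈ U := by
      have := hl' l'.length; rwa [List.take_length] at this
    have hmlU : FreeGroup.mk (l' ++ [(x, bb)]) ∈ U := by
      have := hl (l'.length + 1)
      rwa [List.take_of_length_le (by simp)] at this
    have hsplit : FreeGroup.mk (l' ++ [(x, bb)]) = FreeGroup.mk l' * FreeGroup.mk [(x, bb)] :=
      (FreeGroup.mul_mk).symm
    rw [hsplit, MonoidHom.map_mul, Equiv.Perm.mul_apply]
    cases bb with
    | true =>
      have hof : FreeGroup.mk [(x, true)] = FreeGroup.of x := rfl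
      rw [hof] at hsplit ⊢
      have h1 : hat (b⁻¹ * (FreeGroup.of x)⁻¹) = FreeGroup.mk l' := by
        have hm : (b⁻¹ * (FreeGroup.of x)⁻¹) * (FreeGroup.mk l')⁻¹ ∈ H := by
          have e : (b⁻¹ * (FreeGroup.of x)⁻¹) * (FreeGroup.mk l')⁻¹
              = b⁻¹ * (FreeGroup.mk l' * FreeGroup.of x)⁻¹ := by group
          rw [e, ← hsplit]; exact hb
        rw [hat_eq H U hat hhatU hhatH huniq hm, hat_self H U hat huniq hml']
      have ht : t U hat hhatU (b⁻¹ * (FreeGroup.of x)⁻¹) x = 1 := by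
        refine t_eq_one U hat hhatU ?_
        rw [h1, ← hsplit, hat_self H U hat huniq hmlU]
      rw [Phi_of_apply]
      simp only [ht, one_mul]
      have hcond : (FreeGroup.of x * b)⁻¹ * (FreeGroup.mk l')⁻¹ ∈ H := by
        have e : (FreeGroup.of x * b)⁻¹ * (FreeGroup.mk l')⁻¹
            = b⁻¹ * (FreeGroup.mk l' * FreeGroup.of x)⁻¹ := by group
        rw [e, ← hsplit]; exact hb
      rw [ih hl' (FreeGroup.of x * b) s hcond, mul_assoc]
    | false =>
      rw [mk_single_false] at hsplit ⊢
      have h1 : hat (b⁻¹ : FreeGroup X) = FreeGroup.mk l' * (FreeGroup.of x)⁻¹ := by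
        have hm : (b⁻¹ : FreeGroup X) * (FreeGroup.mk l' * (FreeGroup.of x)⁻¹)⁻¹ ∈ H := by
          rw [← hsplit]; exact hb
        rw [hat_eq H U hat hhatU hhatH huniq hm,
          hat_self H U hat huniq (hsplit ▸ hmlU)]
      have ht : t U hat hhatU (b⁻¹ : FreeGroup X) x = 1 := by
        refine t_eq_one U hat hhatU ?_
        rw [h1]
        have e : FreeGroup.mk l' * (FreeGroup.of x)⁻¹ * FreeGroup.of x = FreeGroup.mk l' := by
          group
        rw [e, hat_self H U hat huniq hml']
      rw [Phi_inv_of_apply]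
      simp only [ht, inv_one, one_mul]
      have hcond : ((FreeGroup.of x)⁻¹ * b)⁻¹ * (FreeGroup.mk l')⁻¹ ∈ H := by
        have e : ((FreeGroup.of x)⁻¹ * b)⁻¹ * (FreeGroup.mk l')⁻¹
            = b⁻¹ * (FreeGroup.mk l' * (FreeGroup.of x)⁻¹)⁻¹ := by group
        rw [e, ← hsplit]; exact hb
      rw [ih hl' ((FreeGroup.of x)⁻¹ * b) s hcond, mul_assoc]

lemma traverse_U (hhatU : ∀ w, hat w ∈ U) (hhatH : ∀ w, w * (hat w)⁻¹ ∈ H)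
    (huniq : ∀ w, ∀ u ∈ U, w * u⁻¹ ∈ H → u = hat w)
    (hS : ∀ u ∈ U, ∀ k : ℕ, FreeGroup.mk (u.toWord.take k) ∈ U)
    {u : FreeGroup X} (hu : u ∈ U) (b : FreeGroup X) (s : FreeGroup (S U hat))
    (hb : b⁻¹ * u⁻¹ ∈ H) :
    Phi U hat hhatU u (b, s) = (u * b, s) := by
  have h := traverse H U hat hhatU hhatH huniq u.toWord (hS u hu) b s
    (by rwa [FreeGroup.mk_toWord])
  rwa [FreeGroup.mk_toWord] at h

/-- The Reidemeister rewriting homomorphism. -/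
noncomputable def rho (hhatU : ∀ w, hat w ∈ U) (hhatH : ∀ w, w * (hat w)⁻¹ ∈ H)
    (huniq : ∀ w, ∀ u ∈ U, w * u⁻¹ ∈ H → u = hat w) :
    H →* FreeGroup (S U hat) where
  toFun h := (Phi U hat hhatU (h : FreeGroup X) (1, 1)).2
  map_one' := by
    show (Phi U hat hhatU (1 : FreeGroup X) (1, 1)).2 = 1
    rw [MonoidHom.map_one]; rfl
  map_mul' h₁ h₂ := by
    show (Phi U hat hhatU ((h₁ : FreeGroup X) * (h₂ : FreeGroup X)) (1, 1)).2 = _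
    rw [MonoidHom.map_mul, Equiv.Perm.mul_apply]
    have h2eq : Phi U hat hhatU (h₂ : FreeGroup X) (1, 1)
        = ((h₂ : FreeGroup X), (Phi U hat hhatU (h₂ : FreeGroup X) (1, 1)).2) :=
      Prod.ext (by rw [Phi_fst, mul_one]) rfl
    rw [h2eq, Phi_snd_mul]
    congr 1
    refine Phi_snd_congr H U hat hhatU hhatH huniq _ _ _ _ ?_
    rw [mul_one]
    exact inv_mem h₂.2

lemma rho_spec (hhatU : ∀ w, hat w ∈ U) (hhatH : ∀ w, w * (hat w)⁻¹ ∈ H)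
    (huniq : ∀ w, ∀ u ∈ U, w * u⁻¹ ∈ H → u = hat w)
    (hS : ∀ u ∈ U, ∀ k : ℕ, FreeGroup.mk (u.toWord.take k) ∈ U)
    (g : FreeGroup X) (hg : g ∈ S U hat) :
    (Phi U hat hhatU g (1, 1)).2 = FreeGroup.of (⟨g, hg⟩ : S U hat) := by
  obtain ⟨⟨u, hu, x, hgm⟩, hg1⟩ := id hg
  set v' := hat (u * FreeGroup.of x) with hv'
  have hv'U : v' ∈ U := hhatU _
  have hgH : u * FreeGroup.of x * v'⁻¹ ∈ H := hhatH (u * FreeGroup.of x)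
  -- Step A / B : Phi v'⁻¹ (1,1) = (v'⁻¹, 1)
  have hA : Phi U hat hhatU v' (v'⁻¹, 1) = (1, 1) := by
    have := traverse_U H U hat hhatU hhatH huniq hS hv'U v'⁻¹ 1 (by simp [one_mem])
    rwa [mul_inv_cancel] at this
  have hB : Phi U hat hhatU v'⁻¹ (1, 1) = (v'⁻¹, 1) := by
    rw [MonoidHom.map_inv]
    have := Equiv.symm_apply_apply (Phi U hat hhatU v') (v'⁻¹, 1)
    rw [hA] at this
    exact this
  -- Step C
  have h1 : hat ((v'⁻¹)⁻¹ * (FreeGroup.of x)⁻¹) = u := by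
    have hm : ((v'⁻¹)⁻¹ * (FreeGroup.of x)⁻¹) * u⁻¹ ∈ H := by
      have e : ((v'⁻¹)⁻¹ * (FreeGroup.of x)⁻¹) * u⁻¹ = (u * FreeGroup.of x * v'⁻¹)⁻¹ := by
        group
      rw [e]; exact inv_mem hgH
    rw [hat_eq H U hat hhatU hhatH huniq hm, hat_self H U hat huniq hu]
  have hC : Phi U hat hhatU (FreeGroup.of x) (v'⁻¹, 1)
      = (FreeGroup.of x * v'⁻¹, FreeGroup.of (⟨g, hg⟩ : S U hat)) := by
    rw [Phi_of_apply]
    refine Prod.ext rfl ?_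
    show t U hat hhatU ((v'⁻¹)⁻¹ * (FreeGroup.of x)⁻¹) x * 1 = _
    rw [mul_one, t, dif_neg]
    · congr 1
      refine Subtype.ext ?_
      show hat ((v'⁻¹)⁻¹ * (FreeGroup.of x)⁻¹) * FreeGroup.of x
          * (hat (hat ((v'⁻¹)⁻¹ * (FreeGroup.of x)⁻¹) * FreeGroup.of x))⁻¹ = g
      rw [h1, hgm, hv']
    · rw [h1, ← hv', ← hgm]
      exact hg1
  -- Step D
  have hD : Phi U hat hhatU u (FreeGroup.of x * v'⁻¹, FreeGroup.of (⟨g, hg⟩ : S U hat))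
      = (u * (FreeGroup.of x * v'⁻¹), FreeGroup.of (⟨g, hg⟩ : S U hat)) := by
    refine traverse_U H U hat hhatU hhatH huniq hS hu _ _ ?_
    have e : (FreeGroup.of x * v'⁻¹)⁻¹ * u⁻¹ = (u * FreeGroup.of x * v'⁻¹)⁻¹ := by group
    rw [e]; exact inv_mem hgH
  have hgsplit : g = u * (FreeGroup.of x * v'⁻¹) := by rw [hgm, hv', mul_assoc]
  have hfinal : Phi U hat hhatU g (1, 1) = (g, FreeGroup.of (⟨g, hg⟩ : S U hat)) := by
    conv_lhs => rw [hgsplit]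
    rw [MonoidHom.map_mul, MonoidHom.map_mul, Equiv.Perm.mul_apply, Equiv.Perm.mul_apply,
      hB, hC, hD, ← hgsplit]
  rw [hfinal]

end Main


section Part1

variable (H : Subgroup (FreeGroup X)) (U : Set (FreeGroup X)) (hat : FreeGroup X → FreeGroup X)

lemma S_subset_H (hhatH : ∀ w, w * (hat w)⁻¹ ∈ H) {g : FreeGroup X} (hg : g ∈ S U hat) :
    g ∈ H := by
  obtain ⟨⟨u, hu, x, rfl⟩, -⟩ := hg
  exact hhatH (u * FreeGroup.of x)

lemma closure_S_eq (hhatU : ∀ w, hat w ∈ U) (hhatH : ∀ w, w * (hat w)⁻¹ ∈ H)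
    (huniq : ∀ w, ∀ u ∈ U, w * u⁻¹ ∈ H → u = hat w) :
    Subgroup.closure (S U hat) = H := by
  apply le_antisymm
  · rw [Subgroup.closure_le]
    intro g hg
    exact S_subset_H H U hat hhatH hg
  · have key : ∀ w : FreeGroup X, ∀ u ∈ U,
        u * w * (hat (u * w))⁻¹ ∈ Subgroup.closure (S U hat) := by
      intro w
      induction w using FreeGroup.induction_on with
      | C1 =>
        intro u hu
        simp only [mul_one]
        rw [hat_self H U hat huniq hu, mul_inv_cancel]
        exact one_mem _
      | of x =>
        intro u hu
        by_cases h : u * FreeGroup.of x * (hat (u * FreeGroup.of x))⁻¹ = 1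
        · rw [h]; exact one_mem _
        · exact Subgroup.subset_closure ⟨⟨u, hu, x, rfl⟩, h⟩
      | inv_of x ih =>
        intro u hu
        set v := hat (u * (FreeGroup.of x)⁻¹) with hv
        have hvU : v ∈ U := hhatU _
        have hvx : hat (v * FreeGroup.of x) = u := by
          refine (huniq (v * FreeGroup.of x) u hu ?_).symm
          have : v * FreeGroup.of x * u⁻¹ = (u * (FreeGroup.of x)⁻¹ * v⁻¹)⁻¹ := by group
          rw [this]
          exact inv_mem (hhatH (u * (FreeGroup.of x)⁻¹))
        have := ih v hvU
        rw [hvx] at this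
        have h2 : u * (FreeGroup.of x)⁻¹ * (hat (u * (FreeGroup.of x)⁻¹))⁻¹
            = (v * FreeGroup.of x * u⁻¹)⁻¹ := by rw [← hv]; group
        rw [h2]
        exact inv_mem this
      | mul w₁ w₂ ih₁ ih₂ =>
        intro u hu
        set v := hat (u * w₁) with hv
        have hvU : v ∈ U := hhatU _
        have h1 : hat (v * w₂) = hat (u * w₁ * w₂) := by
          refine hat_eq H U hat hhatU hhatH huniq ?_
          have : v * w₂ * (u * w₁ * w₂)⁻¹ = v * (u * w₁)⁻¹ := by group
          rw [this]
          have h3 : v * (u * w₁)⁻¹ = (u * w₁ * (hat (u * w₁))⁻¹)⁻¹ := by rw [← hv]; group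
          rw [h3]; exact inv_mem (hhatH (u * w₁))
        have e : u * (w₁ * w₂) * (hat (u * (w₁ * w₂)))⁻¹
            = (u * w₁ * (hat (u * w₁))⁻¹) * (v * w₂ * (hat (v * w₂))⁻¹) := by
          rw [h1, ← hv]; group
        rw [e]
        exact mul_mem (ih₁ u hu) (ih₂ v hvU)
    intro h hh
    set e := hat 1 with he
    have heH : e ∈ H := by
      have := hhatH 1; rw [one_mul] at this; exact (inv_mem_iff).1 this
    have heU : e ∈ U := hhatU 1
    have heK : e ∈ Subgroup.closure (S U hat) := by
      have := key e⁻¹ e heU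
      rw [mul_inv_cancel, ← he, one_mul] at this
      exact (inv_mem_iff).1 this
    have hhe : hat h = e := by
      rw [he]
      exact hat_eq H U hat hhatU hhatH huniq (by simpa using hh)
    have := key (e⁻¹ * h) e heU
    rw [mul_inv_cancel_left, hhe] at this
    have : h = (h * e⁻¹) * e := by group
    rw [this]
    exact mul_mem (by assumption) heK


end Part1

end NSAux

/-- Nielsen–Schreier: for a subgroup `H` of a free group `F(X)` with right transversal `𝒰`
(with `hat w` the representative of `H w`), the nontrivial elements `u • x • (hat (u x))⁻¹`
generate `H`; if moreover `𝒰` is a Schreier transversal (closed under taking prefixes of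
reduced words), they form a free basis of `H`. -/
theorem nielsen_schreier_transversal {X : Type*} [DecidableEq X] (H : Subgroup (FreeGroup X))
    (U : Set (FreeGroup X)) (hat : FreeGroup X → FreeGroup X)
    (hhatU : ∀ w, hat w ∈ U)
    (hhatH : ∀ w, w * (hat w)⁻¹ ∈ H)
    (huniq : ∀ w, ∀ u ∈ U, w * u⁻¹ ∈ H → u = hat w) :
    (Subgroup.closure {g : FreeGroup X | (∃ u ∈ U, ∃ x : X,
        g = u * FreeGroup.of x * (hat (u * FreeGroup.of x))⁻¹) ∧ g ≠ 1} = H) ∧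
    ((∀ u ∈ U, ∀ k : ℕ, FreeGroup.mk (u.toWord.take k) ∈ U) →
      ∃ b : FreeGroupBasis
          ({g : FreeGroup X | (∃ u ∈ U, ∃ x : X,
            g = u * FreeGroup.of x * (hat (u * FreeGroup.of x))⁻¹) ∧ g ≠ 1}) H,
        ∀ s, (b s : FreeGroup X) = (s : FreeGroup X)) := by
  have hset : {g : FreeGroup X | (∃ u ∈ U, ∃ x : X,
      g = u * FreeGroup.of x * (hat (u * FreeGroup.of x))⁻¹) ∧ g ≠ 1} = NSAux.S U hat := rfl
  constructor
  · rw [hset]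
    exact NSAux.closure_S_eq H U hat hhatU hhatH huniq
  · intro hS
    -- the inclusion homomorphism
    let inc : FreeGroup (NSAux.S U hat) →* H :=
      FreeGroup.lift (fun s => ⟨s.1, NSAux.S_subset_H H U hat hhatH s.2⟩)
    have hinc_of : ∀ s : NSAux.S U hat,
        inc (FreeGroup.of s) = ⟨s.1, NSAux.S_subset_H H U hat hhatH s.2⟩ := fun s =>
      FreeGroup.lift_apply_of
    have hinc_coe : ∀ z, ((inc z : H) : FreeGroup X)
        = FreeGroup.lift (Subtype.val : NSAux.S U hat → FreeGroup X) z := by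
      have he : H.subtype.comp inc
          = FreeGroup.lift (Subtype.val : NSAux.S U hat → FreeGroup X) := by
        refine FreeGroup.ext_hom _ _ fun s => ?_
        simp only [MonoidHom.comp_apply, hinc_of, FreeGroup.lift_apply_of]
        rfl
      intro z
      exact DFunLike.congr_fun he z
    have hsurj : Function.Surjective inc := by
      intro h
      have h1 : (h : FreeGroup X) ∈
          (FreeGroup.lift (Subtype.val : NSAux.S U hat → FreeGroup X)).range := by
        rw [FreeGroup.range_lift_eq_closure, Subtype.range_coe]
        rw [NSAux.closure_S_eq H U hat hhatU hhatH huniq]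
        exact h.2
      obtain ⟨z, hz⟩ := h1
      exact ⟨z, Subtype.ext (by rw [hinc_coe z, hz])⟩
    have hinj : Function.Injective inc := by
      have hcomp : (NSAux.rho H U hat hhatU hhatH huniq).comp inc
          = MonoidHom.id (FreeGroup (NSAux.S U hat)) := by
        refine FreeGroup.ext_hom _ _ fun s => ?_
        simp only [MonoidHom.comp_apply, MonoidHom.id_apply, hinc_of]
        show (NSAux.Phi U hat hhatU (s.1 : FreeGroup X) (1, 1)).2 = FreeGroup.of s
        rw [NSAux.rho_spec H U hat hhatU hhatH huniq hS s.1 s.2]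
      intro a b hab
      have := congrArg (NSAux.rho H U hat hhatU hhatH huniq) hab
      rwa [show ∀ z, (NSAux.rho H U hat hhatU hhatH huniq) (inc z) = z from
        fun z => DFunLike.congr_fun hcomp z, show ∀ z,
        (NSAux.rho H U hat hhatU hhatH huniq) (inc z) = z from
        fun z => DFunLike.congr_fun hcomp z] at this
    let e : FreeGroup (NSAux.S U hat) ≃* H := MulEquiv.ofBijective inc ⟨hinj, hsurj⟩
    refine ⟨FreeGroupBasis.ofRepr e.symm, fun s => ?_⟩
    show (((FreeGroupBasis.ofRepr e.symm) s : H) : FreeGroup X) = (s : FreeGroup X)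
    have h1 : (FreeGroupBasis.ofRepr e.symm) s = e.symm.symm (FreeGroup.of s) := rfl
    rw [h1, MulEquiv.symm_symm]
    have h2 : e (FreeGroup.of s) = inc (FreeGroup.of s) := rfl
    rw [h2]; exact congrArg Subtype.val (hinc_of s)
end

section
/- Let F = F(X) be the free group on X, n ≥ 3, and ht: F → ℤ the exponent-sum homomorphism. Let G = {w ∈ F : ht(w) ≡ 1 (mod n−1)} and define f(w₁,…,wₙ) = w₁w₂⋯wₙ (the product in F). Then G is closed under f and (G,f) is an n-ary group. -/
lemma free_nary_prod_cong {X : Type*} (n : ℕ) (ht : FreeGroup X →* Multiplicative ℤ)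
    (l : List (FreeGroup X))
    (hl : ∀ w ∈ l, ((n : ℤ) - 1) ∣ (Multiplicative.toAdd (ht w) - 1)) :
    ((n : ℤ) - 1) ∣ (Multiplicative.toAdd (ht l.prod) - l.length) := by
  induction l with
  | nil => simp
  | cons a t ih =>
    obtain ⟨k1, hk1⟩ := hl a (by simp)
    obtain ⟨k2, hk2⟩ := ih (fun w hw => hl w (by simp [hw]))
    refine ⟨k1 + k2, ?_⟩
    simp only [List.prod_cons, map_mul, toAdd_mul, List.length_cons]
    push_cast
    linarith

/-- The free `n`-ary group: `G = {w ∈ F(X) : ht w ≡ 1 mod (n-1)}` is closed under the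
`n`-fold product in `F(X)`, and with this operation it is an `n`-ary group. -/
theorem free_nary_group {X : Type*} (n : ℕ) (hn : 3 ≤ n)
    (ht : FreeGroup X →* Multiplicative ℤ)
    (hht : ∀ x : X, ht (FreeGroup.of x) = Multiplicative.ofAdd 1)
    (Gs : Set (FreeGroup X))
    (hGs : ∀ w : FreeGroup X, w ∈ Gs ↔ ((n : ℤ) - 1) ∣ (Multiplicative.toAdd (ht w) - 1)) :
    (∀ l : List (FreeGroup X), (∀ w ∈ l, w ∈ Gs) → l.length = n → l.prod ∈ Gs) ∧
    (∀ f : List Gs → Gs,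
      (∀ l : List Gs, l.length = n → (f l : FreeGroup X) = (l.map Subtype.val).prod) →
      IsNAryGroup n f) := by
  constructor
  · intro l hl hlen
    rw [hGs]
    obtain ⟨k, hk⟩ := free_nary_prod_cong n ht l (fun w hw => (hGs w).1 (hl w hw))
    exact ⟨k + 1, by rw [hlen] at hk; linarith⟩
  · intro f hf
    constructor
    · -- associativity
      intro s i j hs hi hj
      have key : ∀ i : ℕ, i + n ≤ s.length →
          ((f (s.take i ++ f ((s.drop i).take n) :: s.drop (i + n)) : Gs) : FreeGroup X) =
            ((s.map Subtype.val).prod) := by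
        intro i hi
        have hinner : ((s.drop i).take n).length = n := by
          simp [List.length_take, List.length_drop]; omega
        have houter : (s.take i ++ f ((s.drop i).take n) :: s.drop (i + n)).length = n := by
          simp [List.length_take, List.length_drop]; omega
        rw [hf _ houter, List.map_append, List.map_cons, List.prod_append, List.prod_cons,
          hf _ hinner]
        simp only [List.map_take, List.map_drop]
        rw [← List.drop_drop]
        conv_rhs => rw [← List.take_append_drop i (s.map Subtype.val),
          ← List.take_append_drop n ((s.map Subtype.val).drop i),
          List.prod_append, List.prod_append]
      exact Subtype.ext ((key i hi).trans (key j hj).symm)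
    · -- unique solutions
      intro a i hlen hi c
      set P : FreeGroup X := ((a.take i).map Subtype.val).prod with hP
      set Q : FreeGroup X := ((a.drop (i + 1)).map Subtype.val).prod with hQ
      have hlenP : ((a.take i).map Subtype.val).length = i := by
        simp [List.length_take]; omega
      have hlenQ : ((a.drop (i + 1)).map Subtype.val).length = n - (i + 1) := by
        simp [List.length_drop, hlen]
      have hmemP : ((n : ℤ) - 1) ∣ (Multiplicative.toAdd (ht P) - i) := by
        have := free_nary_prod_cong n ht ((a.take i).map Subtype.val) ?_
        · rwa [hlenP] at this
        · rintro w hw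
          simp only [List.mem_map] at hw
          obtain ⟨⟨w', hw'⟩, _, rfl⟩ := hw
          exact (hGs w').1 hw'
      have hmemQ : ((n : ℤ) - 1) ∣ (Multiplicative.toAdd (ht Q) - ((n : ℤ) - (i + 1))) := by
        have := free_nary_prod_cong n ht ((a.drop (i + 1)).map Subtype.val) ?_
        · rw [hlenQ] at this
          rwa [Nat.cast_sub (by omega)] at this
        · rintro w hw
          simp only [List.mem_map] at hw
          obtain ⟨⟨w', hw'⟩, _, rfl⟩ := hw
          exact (hGs w').1 hw'
      have hmemc : ((n : ℤ) - 1) ∣ (Multiplicative.toAdd (ht (c : FreeGroup X)) - 1) :=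
        (hGs _).1 c.2
      have hx0mem : (P⁻¹ * (c : FreeGroup X) * Q⁻¹) ∈ Gs := by
        rw [hGs]
        obtain ⟨kp, hkp⟩ := hmemP
        obtain ⟨kq, hkq⟩ := hmemQ
        obtain ⟨kc, hkc⟩ := hmemc
        refine ⟨kc - kp - kq - 1, ?_⟩
        simp only [map_mul, map_inv, toAdd_mul, toAdd_inv]
        push_cast at *
        linarith
      set x0 : Gs := ⟨P⁻¹ * (c : FreeGroup X) * Q⁻¹, hx0mem⟩ with hx0
      have hlist : ∀ x : Gs, (a.take i ++ x :: a.drop (i + 1)).length = n := by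
        intro x; simp [List.length_take, List.length_drop, hlen]; omega
      have hval : ∀ x : Gs,
          ((f (a.take i ++ x :: a.drop (i + 1)) : Gs) : FreeGroup X) = P * (x : FreeGroup X) * Q := by
        intro x
        rw [hf _ (hlist x), List.map_append, List.map_cons, List.prod_append, List.prod_cons,
          ← mul_assoc, hP, hQ]
      refine ⟨x0, ?_, ?_⟩
      · apply Subtype.ext
        rw [hval x0]
        simp only [hx0]
        group
      · intro y hy
        apply Subtype.ext
        have h1 : P * (y : FreeGroup X) * Q = (c : FreeGroup X) := by
          rw [← hval y, hy]
        have : (y : FreeGroup X) = P⁻¹ * (c : FreeGroup X) * Q⁻¹ := by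
          rw [← h1]; group
        rw [this]
end

section
/- Let F = F(X) be a free group of finite rank s ≥ 2, n ≥ 3, ht: F → ℤ the exponent-sum homomorphism, and G = {w ∈ F : ht(w) ≡ 1 (mod n−1)} with the n-ary operation given by the product in F. Then any retract group of (G,f) is a free group of rank (s−1)(n−1)+1. -/
set_option linter.unusedSectionVars false
namespace NaryRetract

variable (s m : ℕ) [NeZero s] [NeZero m]

abbrev Y := (ZMod m × Fin (s-1)) ⊕ Unit

/-- shift action of `ZMod m` on families. -/
def shift : Multiplicative (ZMod m) →* MulAut (ZMod m → FreeGroup (Y s m)) where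
  toFun i :=
    { toFun := fun f k => f (k + i.toAdd)
      invFun := fun f k => f (k - i.toAdd)
      left_inv := fun f => by funext k; simp
      right_inv := fun f => by funext k; simp
      map_mul' := fun f g => rfl }
  map_one' := by ext f k; simp
  map_mul' := fun i j => by ext f k; simp [add_assoc]

def g0 : FreeGroup (Fin s) := FreeGroup.of 0

def fgen (j : Fin s) : ZMod m → FreeGroup (Y s m) :=
  if h : j = 0 then (fun k => if k = ((m-1 : ℕ) : ZMod m) then FreeGroup.of (Sum.inr ()) else 1)
  else fun k => FreeGroup.of (Sum.inl (k, ⟨j.val - 1, by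
    have h1 : j.val < s := j.isLt
    have h2 : j.val ≠ 0 := fun hv => h (Fin.ext (by simp [hv]))
    omega⟩))

def Θ : FreeGroup (Fin s) →* (ZMod m → FreeGroup (Y s m)) ⋊[shift s m] Multiplicative (ZMod m) :=
  FreeGroup.lift (fun j => ⟨fgen s m j, Multiplicative.ofAdd (1 : ZMod m)⟩)

lemma mul_left_apply (p q : (ZMod m → FreeGroup (Y s m)) ⋊[shift s m] Multiplicative (ZMod m))
    (k : ZMod m) : (p * q).left k = p.left k * q.left (k + p.right.toAdd) := rfl

lemma inv_left_apply (p : (ZMod m → FreeGroup (Y s m)) ⋊[shift s m] Multiplicative (ZMod m))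
    (k : ZMod m) : (p⁻¹).left k = (p.left (k - p.right.toAdd))⁻¹ := by
  show (shift s m p.right⁻¹ p.left⁻¹) k = _
  simp [shift, sub_eq_add_neg]

def β : Y s m → FreeGroup (Fin s)
  | Sum.inl (i, j') => g0 s ^ i.val * FreeGroup.of ⟨j'.val + 1, by have := j'.isLt; omega⟩ *
      (g0 s ^ ((i + 1 : ZMod m)).val)⁻¹
  | Sum.inr _ => g0 s ^ m

def π : FreeGroup (Y s m) →* FreeGroup (Fin s) := FreeGroup.lift (β s m)

lemma theta_of (j : Fin s) : Θ s m (FreeGroup.of j) =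
    ⟨fgen s m j, Multiplicative.ofAdd (1 : ZMod m)⟩ := FreeGroup.lift_apply_of

/-- Key Lemma A -/
lemma lemmaA (hm : 2 ≤ m) (w : FreeGroup (Fin s)) (k : ZMod m) :
    π s m ((Θ s m w).left k) =
      g0 s ^ k.val * w * (g0 s ^ ((k + (Θ s m w).right.toAdd).val))⁻¹ := by
  induction w using FreeGroup.induction_on generalizing k with
  | C1 =>
    simp [π]
  | of x =>
    have hx : (pure x : FreeGroup (Fin s)) = FreeGroup.of x := rfl
    rw [theta_of]
    show π s m (fgen s m x k) = g0 s ^ k.val * FreeGroup.of x *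
      (g0 s ^ ((k + (1 : ZMod m)).val))⁻¹
    by_cases h : x = 0
    · subst h
      simp only [fgen, dite_true]
      by_cases hk : k = ((m-1 : ℕ) : ZMod m)
      · rw [if_pos hk, hk]
        have h1 : ((m-1 : ℕ) : ZMod m).val = m - 1 := ZMod.val_cast_of_lt (by omega)
        have h2 : (((m-1 : ℕ) : ZMod m) + 1) = 0 := by
          have e : ((m-1 : ℕ) : ZMod m) + 1 = ((m - 1 + 1 : ℕ) : ZMod m) := by push_cast; ring
          rw [e, Nat.sub_add_cancel (by omega : 1 ≤ m), ZMod.natCast_self]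
        rw [h1, h2]
        have hβ : π s m (FreeGroup.of (Sum.inr ())) = g0 s ^ m := FreeGroup.lift_apply_of
        rw [hβ, ZMod.val_zero, pow_zero, inv_one, mul_one]
        show g0 s ^ m = g0 s ^ (m-1) * g0 s
        rw [← pow_succ, Nat.sub_add_cancel (by omega : 1 ≤ m)]
      · rw [if_neg hk]
        have hkv : k.val ≠ m - 1 := by
          intro hv
          apply hk
          have := ZMod.natCast_rightInverse (n := m) k
          rw [← this, hv]
        have hv1 : (1 : ZMod m).val = 1 := by
          rw [ZMod.val_one_eq_one_mod]; exact Nat.mod_eq_of_lt (by omega)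
        have hklt : k.val < m := k.val_lt
        have h3 : (k + 1).val = k.val + 1 := by
          rw [ZMod.val_add, hv1, Nat.mod_eq_of_lt (by omega)]
        rw [h3]
        show (1 : FreeGroup (Fin s)) = g0 s ^ k.val * g0 s * (g0 s ^ (k.val + 1))⁻¹
        rw [← pow_succ, mul_inv_cancel]
    · obtain ⟨j', rfl⟩ : ∃ j' : Fin (s-1), x = ⟨j'.val + 1, by have := j'.isLt; omega⟩ := by
        have h2 : x.val ≠ 0 := fun hv => h (Fin.ext (by simp [hv]))
        exact ⟨⟨x.val - 1, by have := x.isLt; omega⟩, Fin.ext (by simp; omega)⟩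
      simp only [fgen, dif_neg h]
      have hj : (⟨(⟨j'.val + 1, by have := j'.isLt; omega⟩ : Fin s).val - 1,
          by have := j'.isLt; simp⟩ : Fin (s-1)) = j' := Fin.ext (by simp)
      rw [hj]
      exact FreeGroup.lift_apply_of
  | inv_of x ih =>
    rw [map_inv, inv_left_apply, map_inv, ih]
    simp only [SemidirectProduct.inv_right, toAdd_inv, ← sub_eq_add_neg, sub_add_cancel]
    group
  | mul u v ihu ihv =>
    rw [map_mul, mul_left_apply, map_mul, ihu, ihv]
    simp only [SemidirectProduct.mul_right, toAdd_mul, ← add_assoc]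
    group

lemma right_pow (t : ℕ) :
    (Θ s m (g0 s ^ t)).right = Multiplicative.ofAdd ((t : ZMod m)) := by
  induction t with
  | zero => simp
  | succ t ih =>
    rw [pow_succ, map_mul, SemidirectProduct.mul_right, ih, g0, theta_of]
    show Multiplicative.ofAdd _ * Multiplicative.ofAdd _ = _
    rw [← ofAdd_add]
    push_cast
    ring_nf

lemma left_pow_zero (t : ℕ) (h : t < m) : (Θ s m (g0 s ^ t)).left 0 = 1 := by
  induction t with
  | zero => simp
  | succ t ih =>
    rw [pow_succ, map_mul, mul_left_apply, ih (by omega), right_pow]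
    rw [g0, theta_of]
    show 1 * fgen s m 0 (0 + (t : ZMod m)) = 1
    rw [one_mul, zero_add]
    simp only [fgen, dite_true]
    rw [if_neg]
    intro he
    have h1 : ((t : ℕ) : ZMod m).val = t := ZMod.val_cast_of_lt (by omega)
    have h2 : ((m-1 : ℕ) : ZMod m).val = m - 1 := ZMod.val_cast_of_lt (by omega)
    rw [he, h2] at h1
    omega

lemma theta_of_left (j : Fin s) (k : ZMod m) :
    (Θ s m (FreeGroup.of j)).left k = fgen s m j k := by rw [theta_of]

lemma theta_of_right (j : Fin s) :
    (Θ s m (FreeGroup.of j)).right = Multiplicative.ofAdd (1 : ZMod m) := by rw [theta_of]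

lemma natCast_val (i : ZMod m) : ((i.val : ℕ) : ZMod m) = i := ZMod.natCast_rightInverse i

/-- Key Lemma B -/
lemma lemmaB (hm : 2 ≤ m) (y : Y s m) :
    (Θ s m (β s m y)).left 0 = FreeGroup.of y ∧ (Θ s m (β s m y)).right = 1 := by
  obtain (⟨i, j'⟩ | u) := y
  · have hjj : (⟨j'.val + 1, by have := j'.isLt; omega⟩ : Fin s) ≠ 0 := by
      intro hh
      have : j'.val + 1 = 0 := by
        have := congrArg Fin.val hh
        simpa using this
      omega
    have he : ((i + 1 : ZMod m).val : ZMod m) = i + 1 := natCast_val m _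
    have hiv : ((i.val : ℕ) : ZMod m) = i := natCast_val m i
    constructor
    · show (Θ s m (g0 s ^ i.val * FreeGroup.of _ * (g0 s ^ ((i + 1 : ZMod m)).val)⁻¹)).left 0 = _
      rw [map_mul, map_mul, map_inv, mul_left_apply, mul_left_apply, inv_left_apply]
      simp only [SemidirectProduct.mul_right, SemidirectProduct.inv_right, right_pow,
        theta_of_right, theta_of_left, toAdd_ofAdd, toAdd_mul, zero_add]
      rw [hiv, he, sub_self, left_pow_zero s m i.val i.val_lt,
        left_pow_zero s m _ (ZMod.val_lt _), one_mul, inv_one, mul_one]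
      simp only [fgen, dif_neg hjj]
      have hj : (⟨(⟨j'.val + 1, by have := j'.isLt; omega⟩ : Fin s).val - 1,
          by have := j'.isLt; simp⟩ : Fin (s-1)) = j' := Fin.ext (by simp)
      rw [hj]
    · show (Θ s m (g0 s ^ i.val * FreeGroup.of _ * (g0 s ^ ((i + 1 : ZMod m)).val)⁻¹)).right = 1
      rw [map_mul, map_mul, map_inv]
      simp only [SemidirectProduct.mul_right, SemidirectProduct.inv_right, right_pow,
        theta_of_right]
      rw [hiv, he]
      exact mul_inv_cancel (Multiplicative.ofAdd (i + 1))
  · constructor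
    · show (Θ s m (g0 s ^ m)).left 0 = _
      have hsp : g0 s ^ m = g0 s ^ (m - 1) * g0 s := by
        rw [← pow_succ, Nat.sub_add_cancel (by omega : 1 ≤ m)]
      rw [hsp, map_mul, mul_left_apply, left_pow_zero s m (m-1) (by omega), right_pow,
        g0, theta_of_left]
      rw [one_mul, toAdd_ofAdd, zero_add]
      simp only [fgen, dite_true, if_true]
    · show (Θ s m (g0 s ^ m)).right = 1
      rw [right_pow, ZMod.natCast_self]
      rfl

end NaryRetract

/-- The retract of the free `n`-ary group of rank `s` is a free group of
rank `(s-1)(n-1) + 1`. -/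
theorem retract_of_free_nary_is_free (s : ℕ) (hs : 2 ≤ s) (n : ℕ) (hn : 3 ≤ n)
    (ht : FreeGroup (Fin s) →* Multiplicative ℤ)
    (hht : ∀ x : Fin s, ht (FreeGroup.of x) = Multiplicative.ofAdd 1)
    (Gs : Set (FreeGroup (Fin s)))
    (hGs : ∀ w : FreeGroup (Fin s),
      w ∈ Gs ↔ ((n : ℤ) - 1) ∣ (Multiplicative.toAdd (ht w) - 1))
    (a : Gs) (star : Gs → Gs → Gs)
    (hstar : ∀ x y : Gs,
      (star x y : FreeGroup (Fin s)) = (x : FreeGroup (Fin s)) *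
        ((a : FreeGroup (Fin s)) ^ (n - 2)) * (y : FreeGroup (Fin s))) :
    ∃ φ : Gs → FreeGroup (Fin ((s - 1) * (n - 1) + 1)),
      Function.Bijective φ ∧ ∀ x y : Gs, φ (star x y) = φ x * φ y := by
  classical
  set m := n - 1 with hm_def
  haveI : NeZero m := ⟨by omega⟩
  haveI : NeZero s := ⟨by omega⟩
  have hm : 2 ≤ m := by omega
  -- the equivalence of index types
  have hcard : Fintype.card (NaryRetract.Y s m) = (s - 1) * (n - 1) + 1 := by
    have h1 : Fintype.card (NaryRetract.Y s m) = m * (s - 1) + 1 := by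
      simp [NaryRetract.Y, ZMod.card]
    rw [h1, hm_def, Nat.mul_comm]
  let e := Fintype.equivFinOfCardEq hcard
  let Φ := FreeGroup.freeGroupCongr e
  -- abbreviations
  set Θ := NaryRetract.Θ s m with hΘ
  set π := NaryRetract.π s m with hπ
  -- bridge between ht and the right component
  have hbridge : ∀ w : FreeGroup (Fin s),
      (Θ w).right = Multiplicative.ofAdd (((Multiplicative.toAdd (ht w) : ℤ) : ZMod m)) := by
    intro w
    induction w using FreeGroup.induction_on with
    | C1 => simp
    | of x =>
      have hx : (pure x : FreeGroup (Fin s)) = FreeGroup.of x := rfl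
      rw [NaryRetract.theta_of_right, hht x]
      simp
    | inv_of x ih =>
      rw [map_inv, SemidirectProduct.inv_right, ih, map_inv]
      simp [← ofAdd_neg]
    | mul u v ihu ihv =>
      rw [map_mul, SemidirectProduct.mul_right, ihu, ihv, map_mul]
      simp [← ofAdd_add]
  have hmem : ∀ w : FreeGroup (Fin s),
      (Θ w).right = 1 ↔ (m : ℤ) ∣ Multiplicative.toAdd (ht w) := by
    intro w
    rw [hbridge w, ← ZMod.intCast_zmod_eq_zero_iff_dvd]
    constructor
    · intro h
      have := congrArg Multiplicative.toAdd h
      simpa using this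
    · intro h; rw [h]; rfl
  have hGs' : ∀ w : FreeGroup (Fin s),
      w ∈ Gs ↔ (m : ℤ) ∣ (Multiplicative.toAdd (ht w) - 1) := by
    intro w
    rw [hGs w]
    have : ((n : ℤ) - 1) = (m : ℤ) := by omega
    rw [this]
  -- right component of ψ x vanishes
  have hta : (m : ℤ) ∣ (Multiplicative.toAdd (ht ↑a) - 1) := (hGs' _).mp a.2
  have hpsi_right : ∀ x : Gs, (Θ ((a : FreeGroup (Fin s)) ^ (n - 2) * ↑x)).right = 1 := by
    intro x
    rw [hmem]
    have htx : (m : ℤ) ∣ (Multiplicative.toAdd (ht ↑x) - 1) := (hGs' _).mp x.2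
    rw [map_mul, map_pow, toAdd_mul, toAdd_pow]
    have hn2 : ((n - 2 : ℕ) : ℤ) = (m : ℤ) - 1 := by omega
    have : (n - 2 : ℕ) • Multiplicative.toAdd (ht ↑a) + Multiplicative.toAdd (ht ↑x) =
        (m : ℤ) * Multiplicative.toAdd (ht ↑a) -
          (Multiplicative.toAdd (ht ↑a) - 1) + (Multiplicative.toAdd (ht ↑x) - 1) := by
      rw [nsmul_eq_mul, hn2]; ring
    rw [this]
    exact dvd_add (dvd_sub (dvd_mul_right _ _) hta) htx
  -- recovery of elements from the rewriting
  have hrecover : ∀ w : FreeGroup (Fin s), (Θ w).right = 1 → π ((Θ w).left 0) = w := by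
    intro w hw
    have := NaryRetract.lemmaA s m hm w 0
    rw [hw] at this
    simpa using this
  -- definition of φ
  refine ⟨fun x => Φ ((Θ ((a : FreeGroup (Fin s)) ^ (n - 2) * ↑x)).left 0), ⟨?_, ?_⟩, ?_⟩
  · -- injectivity
    intro x y hxy
    have h1 : (Θ ((a : FreeGroup (Fin s)) ^ (n - 2) * ↑x)).left 0 =
        (Θ ((a : FreeGroup (Fin s)) ^ (n - 2) * ↑y)).left 0 := Φ.injective hxy
    have h2 := hrecover _ (hpsi_right x)
    rw [h1, hrecover _ (hpsi_right y)] at h2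
    exact Subtype.ext (mul_left_cancel h2).symm
  · -- surjectivity
    intro g
    -- the rewriting is a retraction of π
    have hsect : ∀ h : FreeGroup (NaryRetract.Y s m),
        (Θ (π h)).left 0 = h ∧ (Θ (π h)).right = 1 := by
      intro h
      induction h using FreeGroup.induction_on with
      | C1 => simp
      | of y =>
        have hy : (pure y : FreeGroup (NaryRetract.Y s m)) = FreeGroup.of y := rfl
        have hπy : π (FreeGroup.of y) = NaryRetract.β s m y := FreeGroup.lift_apply_of
        rw [hπy]
        exact NaryRetract.lemmaB s m hm y
      | inv_of y ih =>
        constructor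
        · rw [map_inv, map_inv, NaryRetract.inv_left_apply, ih.2, toAdd_one, sub_zero, ih.1]
        · rw [map_inv, map_inv, SemidirectProduct.inv_right, ih.2]; exact inv_one
      | mul u v ihu ihv =>
        constructor
        · rw [map_mul, map_mul, NaryRetract.mul_left_apply, ihu.2, toAdd_one, add_zero,
            ihu.1, ihv.1]
        · rw [map_mul, map_mul, SemidirectProduct.mul_right, ihu.2, ihv.2, one_mul]
    set w := π (Φ.symm g) with hw
    obtain ⟨hw1, hw2⟩ := hsect (Φ.symm g)
    have hxmem : ((a : FreeGroup (Fin s)) ^ (n - 2))⁻¹ * w ∈ Gs := by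
      rw [hGs']
      have htw : (m : ℤ) ∣ Multiplicative.toAdd (ht w) := (hmem w).mp hw2
      rw [map_mul, map_inv, map_pow, toAdd_mul, toAdd_inv, toAdd_pow]
      have hn2 : ((n - 2 : ℕ) : ℤ) = (m : ℤ) - 1 := by omega
      have heq : -((n - 2 : ℕ) • Multiplicative.toAdd (ht ↑a)) +
          Multiplicative.toAdd (ht w) - 1 =
          -((m : ℤ) * Multiplicative.toAdd (ht ↑a)) +
            (Multiplicative.toAdd (ht ↑a) - 1) + Multiplicative.toAdd (ht w) := by
        rw [nsmul_eq_mul, hn2]; ring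
      rw [heq]
      exact dvd_add (dvd_add (dvd_neg.mpr (dvd_mul_right _ _)) hta) htw
    refine ⟨⟨_, hxmem⟩, ?_⟩
    show Φ ((Θ ((a : FreeGroup (Fin s)) ^ (n - 2) *
      (((a : FreeGroup (Fin s)) ^ (n - 2))⁻¹ * w))).left 0) = g
    rw [mul_inv_cancel_left, hw1]
    exact Φ.apply_symm_apply g
  · -- homomorphism property
    intro x y
    have hψ : (a : FreeGroup (Fin s)) ^ (n - 2) * ↑(star x y) =
        ((a : FreeGroup (Fin s)) ^ (n - 2) * ↑x) *
          ((a : FreeGroup (Fin s)) ^ (n - 2) * ↑y) := by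
      rw [hstar x y]; group
    show Φ _ = Φ _ * Φ _
    rw [← map_mul]
    congr 1
    rw [hψ, map_mul, NaryRetract.mul_left_apply, hpsi_right x]
    simp
end

section
/- Let (G,f) = der_{θ,b}(G,·) be an n-ary group (n ≥ 3) that is a free n-ary group of rank s > 1. Then the group (G,·) is a free group of rank k = (s−1)(n−1)+1. -/
open FreeGroup SemidirectProduct Multiplicative

/-! ### Auxiliary structural results: `FreeGroup (Option (Fin m × I))` as a semidirect product -/

/-- Shift action of `ℤ` on `FreeGroup (ℤ × I)`, moving the first coordinate by `m * k`. -/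
def shiftAct (I : Type*) (m : ℤ) : Multiplicative ℤ →* MulAut (FreeGroup (ℤ × I)) :=
  MonoidHom.mk' (fun k => FreeGroup.freeGroupCongr
      (Equiv.prodCongr (Equiv.addRight (m * k.toAdd)) (Equiv.refl I)))
    (by
      intro a b
      apply MulEquiv.toMonoidHom_injective
      apply FreeGroup.ext_hom
      rintro ⟨j, i⟩
      simp [MulAut.mul_apply, mul_add]
      ring_nf)

@[simp] lemma shiftAct_of {I : Type*} (m : ℤ) (k : Multiplicative ℤ) (j : ℤ) (i : I) :
    shiftAct I m k (FreeGroup.of (j, i)) = FreeGroup.of (j + m * k.toAdd, i) := by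
  simp [shiftAct]

/-- Forward homomorphism from the free group on `Option (Fin m × I)` to the semidirect product. -/
def fwdHom (I : Type*) (m : ℕ) :
    FreeGroup (Option (Fin m × I)) →* FreeGroup (ℤ × I) ⋊[shiftAct I (m:ℤ)] Multiplicative ℤ :=
  FreeGroup.lift fun o => match o with
    | none => inr (ofAdd 1)
    | some (r, i) => inl (FreeGroup.of ((r : ℤ), i))

lemma emod_toNat_lt {m : ℕ} (j : ℤ) (hm : 0 < m) : (j % (m:ℤ)).toNat < m := by
  have h1 : 0 ≤ j % (m:ℤ) := Int.emod_nonneg _ (by exact_mod_cast hm.ne')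
  have h2 : j % (m:ℤ) < m := Int.emod_lt_of_pos _ (by exact_mod_cast hm)
  omega

/-- Backward homomorphism on the normal-subgroup part. -/
def bwdN (I : Type*) (m : ℕ) (hm : 0 < m) :
    FreeGroup (ℤ × I) →* FreeGroup (Option (Fin m × I)) :=
  FreeGroup.lift fun p =>
    (FreeGroup.of (none : Option (Fin m × I))) ^ (p.1 / (m:ℤ)) *
      FreeGroup.of (some (⟨(p.1 % (m:ℤ)).toNat, emod_toNat_lt p.1 hm⟩, p.2)) *
      (FreeGroup.of (none : Option (Fin m × I))) ^ (-(p.1 / (m:ℤ)))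

lemma bwd_compat (I : Type*) (m : ℕ) (hm : 0 < m) :
    ∀ g : Multiplicative ℤ, (bwdN I m hm).comp ((shiftAct I (m:ℤ)) g).toMonoidHom =
      (MulAut.conj ((zpowersHom _ (FreeGroup.of (none : Option (Fin m × I)))) g)).toMonoidHom.comp
        (bwdN I m hm) := by
  intro g
  apply FreeGroup.ext_hom
  rintro ⟨j, i⟩
  have hm' : (m:ℤ) ≠ 0 := by exact_mod_cast hm.ne'
  have hdiv : (j + (m:ℤ) * g.toAdd) / (m:ℤ) = j / (m:ℤ) + g.toAdd :=
    Int.add_mul_ediv_left j g.toAdd hm'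
  have hmod : (j + (m:ℤ) * g.toAdd) % (m:ℤ) = j % (m:ℤ) := by
    rw [mul_comm]; exact Int.add_mul_emod_self_right ..
  simp only [MonoidHom.comp_apply, MulEquiv.coe_toMonoidHom, shiftAct_of, bwdN,
    FreeGroup.lift_apply_of, MulAut.conj_apply, zpowersHom_apply]
  simp only [hdiv, hmod]
  group

/-- Backward homomorphism from the semidirect product. -/
def bwdHom (I : Type*) (m : ℕ) (hm : 0 < m) :
    (FreeGroup (ℤ × I) ⋊[shiftAct I (m:ℤ)] Multiplicative ℤ) →* FreeGroup (Option (Fin m × I)) :=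
  SemidirectProduct.lift (bwdN I m hm) (zpowersHom _ (FreeGroup.of none)) (bwd_compat I m hm)

lemma bwd_fwd (I : Type*) (m : ℕ) (hm : 0 < m) :
    (bwdHom I m hm).comp (fwdHom I m) = MonoidHom.id _ := by
  apply FreeGroup.ext_hom
  rintro (_ | ⟨r, i⟩)
  · simp [fwdHom, bwdHom, bwdN]
  · have h0 : ((r:ℤ)) / (m:ℤ) = 0 := Int.ediv_eq_zero_of_lt (by positivity) (by exact_mod_cast r.2)
    have h1 : ((r:ℤ)) % (m:ℤ) = (r:ℤ) := Int.emod_eq_of_lt (by positivity) (by exact_mod_cast r.2)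
    simp [fwdHom, bwdHom, bwdN, h0, h1]

lemma fwd_bwd (I : Type*) (m : ℕ) (hm : 0 < m) :
    (fwdHom I m).comp (bwdHom I m hm) = MonoidHom.id _ := by
  apply SemidirectProduct.hom_ext
  · apply FreeGroup.ext_hom
    rintro ⟨j, i⟩
    have key : j % (m:ℤ) + (m:ℤ) * (j / (m:ℤ)) = j := Int.emod_add_mul_ediv j m
    have h2 : ((⟨(j % (m:ℤ)).toNat, emod_toNat_lt j hm⟩ : Fin m) : ℤ) = j % (m:ℤ) := by
      simp [Int.toNat_of_nonneg (Int.emod_nonneg _ (by exact_mod_cast hm.ne' : (m:ℤ) ≠ 0))]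
    simp only [MonoidHom.comp_apply, MonoidHom.id_apply, MonoidHom.comp_apply]
    rw [show (SemidirectProduct.inl (FreeGroup.of (j, i)) :
        FreeGroup (ℤ × I) ⋊[shiftAct I (m:ℤ)] Multiplicative ℤ) = inl (FreeGroup.of (j, i)) from rfl]
    rw [bwdHom, SemidirectProduct.lift_inl, bwdN, FreeGroup.lift_apply_of]
    rw [MonoidHom.map_mul, MonoidHom.map_mul, MonoidHom.map_zpow, MonoidHom.map_zpow]
    rw [show (fwdHom I m) (FreeGroup.of none) = inr (ofAdd 1) from FreeGroup.lift_apply_of]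
    rw [show (fwdHom I m) (FreeGroup.of (some (⟨(j % (m:ℤ)).toNat, emod_toNat_lt j hm⟩, i)))
        = inl (FreeGroup.of (((⟨(j % (m:ℤ)).toNat, emod_toNat_lt j hm⟩ : Fin m) : ℤ), i))
        from FreeGroup.lift_apply_of]
    rw [← MonoidHom.map_zpow, ← MonoidHom.map_zpow, h2]
    rw [show ((ofAdd 1 : Multiplicative ℤ) ^ (-(j / (m:ℤ)))) = ((ofAdd 1 : Multiplicative ℤ) ^ (j / (m:ℤ)))⁻¹ by group]
    rw [← inl_aut]
    rw [show ((ofAdd 1 : Multiplicative ℤ) ^ (j / (m:ℤ))) = ofAdd (j / (m:ℤ)) by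
      rw [← ofAdd_zsmul]; norm_num]
    simp [key]
  · apply MonoidHom.ext_mint
    simp [bwdHom, fwdHom]

/-- The key structural isomorphism: the free group on `m * |I| + 1` generators is the
semidirect product of the free group on `ℤ × I` with `ℤ` acting by shifting by `m`. -/
def freeSdIso (I : Type*) (m : ℕ) (hm : 0 < m) :
    FreeGroup (Option (Fin m × I)) ≃* (FreeGroup (ℤ × I) ⋊[shiftAct I (m:ℤ)] Multiplicative ℤ) :=
  MonoidHom.toMulEquiv (fwdHom I m) (bwdHom I m hm) (bwd_fwd I m hm) (fwd_bwd I m hm)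

@[simp] lemma freeSdIso_apply (I : Type*) (m : ℕ) (hm : 0 < m) (x) :
    freeSdIso I m hm x = fwdHom I m x := rfl

/-- The embedding of the `shift by m` semidirect product into the `shift by 1` one. -/
def iotaHom (I : Type*) (m : ℕ) :
    (FreeGroup (ℤ × I) ⋊[shiftAct I (m:ℤ)] Multiplicative ℤ) →*
      (FreeGroup (ℤ × I) ⋊[shiftAct I 1] Multiplicative ℤ) :=
  SemidirectProduct.map (MonoidHom.id _) (zpowersHom _ (ofAdd (m:ℤ)))
    (by
      intro g
      apply FreeGroup.ext_hom
      rintro ⟨j, i⟩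
      simp only [MonoidHom.comp_apply, MulEquiv.coe_toMonoidHom, MonoidHom.id_apply,
        shiftAct_of, zpowersHom_apply, ← MonoidHom.map_zpow]
      rw [show (ofAdd (m:ℤ)) ^ toAdd g = ofAdd (toAdd g * (m:ℤ)) by rw [← ofAdd_zsmul]; simp]
      exact congrArg FreeGroup.of (Prod.ext (by simp [mul_comm]) rfl))

@[simp] lemma iotaHom_left {I : Type*} {m : ℕ} (x) : (iotaHom I m x).left = x.left := rfl

@[simp] lemma iotaHom_right {I : Type*} {m : ℕ} (x) :
    ((iotaHom I m x).right).toAdd = (m:ℤ) * x.right.toAdd := by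
  show ((ofAdd (m:ℤ)) ^ x.right.toAdd).toAdd = _
  rw [← ofAdd_zsmul]; simp [mul_comm]

lemma iotaHom_injective (I : Type*) (m : ℕ) (hm : 0 < m) :
    Function.Injective (iotaHom I m) := by
  intro x y h
  have h1 : x.left = y.left := by
    have := congrArg SemidirectProduct.left h; simpa using this
  have h2 : (m:ℤ) * x.right.toAdd = (m:ℤ) * y.right.toAdd := by
    rw [← iotaHom_right, ← iotaHom_right, h]
  have h3 : x.right = y.right := by
    have hm' : (m:ℤ) ≠ 0 := by exact_mod_cast hm.ne'
    exact toAdd.injective (mul_left_cancel₀ hm' h2)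
  exact SemidirectProduct.ext h1 h3

lemma iotaHom_range (I : Type*) (m : ℕ) :
    Set.range (iotaHom I m) = {x | (m:ℤ) ∣ x.right.toAdd} := by
  ext x
  constructor
  · rintro ⟨y, rfl⟩
    exact ⟨y.right.toAdd, by simp⟩
  · rintro ⟨k, hk⟩
    refine ⟨⟨x.left, ofAdd k⟩, ?_⟩
    apply SemidirectProduct.ext
    · rfl
    · apply toAdd.injective
      rw [iotaHom_right]
      simpa using hk.symm

/-- The automorphism of `FreeGroup (Option K)` fixing `of none =: t` and sending
`of (some j)` to `of (some j) * t`. -/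
def twistAut (K : Type*) : FreeGroup (Option K) ≃* FreeGroup (Option K) :=
  MonoidHom.toMulEquiv
    (FreeGroup.lift fun o => match o with
      | none => FreeGroup.of (none : Option K)
      | some j => FreeGroup.of (some j) * FreeGroup.of none)
    (FreeGroup.lift fun o => match o with
      | none => FreeGroup.of (none : Option K)
      | some j => FreeGroup.of (some j) * (FreeGroup.of none)⁻¹)
    (by apply FreeGroup.ext_hom; rintro (_ | j) <;> simp)
    (by apply FreeGroup.ext_hom; rintro (_ | j) <;> simp)

lemma twistAut_eq_lift (K : Type*) : ⇑(twistAut K) = ⇑(FreeGroup.lift fun o => match o with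
    | none => FreeGroup.of (none : Option K)
    | some j => FreeGroup.of (some j) * FreeGroup.of none) := rfl

@[simp] lemma twistAut_of_none (K : Type*) :
    twistAut K (FreeGroup.of none) = FreeGroup.of none := by
  rw [twistAut_eq_lift, FreeGroup.lift_apply_of]

@[simp] lemma twistAut_of_some (K : Type*) (j : K) :
    twistAut K (FreeGroup.of (some j)) = FreeGroup.of (some j) * FreeGroup.of none := by
  rw [twistAut_eq_lift, FreeGroup.lift_apply_of]

lemma rightHom_freeSdIso_twist {I : Type*} (o : Option (Fin 1 × I)) :
    rightHom (freeSdIso I 1 one_pos (twistAut _ (FreeGroup.of o))) = ofAdd 1 := by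
  rcases o with _ | ⟨r, i⟩
  · rw [twistAut_of_none, freeSdIso_apply]
    rw [show fwdHom I 1 (FreeGroup.of (none : Option (Fin 1 × I))) = inr (ofAdd 1) from
      FreeGroup.lift_apply_of]
    exact rightHom_inr _
  · rw [twistAut_of_some, freeSdIso_apply, MonoidHom.map_mul]
    rw [show fwdHom I 1 (FreeGroup.of (none : Option (Fin 1 × I))) = inr (ofAdd 1) from
      FreeGroup.lift_apply_of]
    rw [show fwdHom I 1 (FreeGroup.of (some (r, i))) = inl (FreeGroup.of ((r : ℤ), i)) from
      FreeGroup.lift_apply_of]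
    simp

/-- A product lemma for `mapIdx` over a replicated list of ones. -/
lemma mapIdx_replicate_one_prod {M : Type*} [Monoid M] :
    ∀ (k : ℕ) (g : ℕ → M → M), (∀ i, g i 1 = 1) →
      ((List.replicate k (1:M)).mapIdx g).prod = 1 := by
  intro k
  induction k with
  | zero => intro g hg; simp
  | succ k ih =>
    intro g hg
    rw [List.replicate_succ, List.mapIdx_cons, List.prod_cons, hg, one_mul]
    exact ih _ fun i => hg (i+1)

/-- The binary multiplication is a derived operation of the `n`-ary one. -/
lemma nary_deriv_mul {G : Type*} [Group G] (n : ℕ) (hn : 3 ≤ n) (θ : G ≃* G) (b : G)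
    (hconj : ∀ x : G, (⇑θ)^[n - 1] x = b * x * b⁻¹) (x y : G) :
    (((x :: θ.symm b⁻¹ :: (List.replicate (n-3) (1:G) ++ [y])).mapIdx
        fun i z => (⇑θ)^[i] z).prod) * b = x * y := by
  rw [List.mapIdx_cons, List.mapIdx_cons, List.mapIdx_append, List.prod_cons, List.prod_cons,
    List.prod_append]
  rw [mapIdx_replicate_one_prod _ _ (by intro i; exact Function.iterate_fixed (_root_.map_one θ) _)]
  simp only [List.mapIdx_cons, List.mapIdx_nil, List.prod_cons, List.prod_nil,
    List.length_replicate, Function.iterate_zero_apply, Function.iterate_one]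
  rw [show (0 + (n-3) + 1 + 1) = n - 1 by omega]
  rw [hconj y]
  rw [show (0+1) = 1 by rfl, Function.iterate_one, MulEquiv.apply_symm_apply]
  group

/-- `(G, f)` is a free `n`-ary group of rank `s`: it is isomorphic (as an `n`-ary group) to
`{w ∈ F(X) : ht w ≡ 1 mod (n-1)}` with the `n`-fold product, where `|X| = s` and `ht` is the
exponent-sum homomorphism. -/
def IsFreeNAryGroupOfRank {G : Type*} (n s : ℕ) (f : List G → G) : Prop :=
  ∃ ht : FreeGroup (Fin s) →* Multiplicative ℤ,
    (∀ x : Fin s, ht (FreeGroup.of x) = Multiplicative.ofAdd 1) ∧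
    ∃ β : G ≃ {w : FreeGroup (Fin s) // ((n : ℤ) - 1) ∣ (Multiplicative.toAdd (ht w) - 1)},
      ∀ l : List G, l.length = n →
        (β (f l) : FreeGroup (Fin s)) =
          (l.map fun x => (β x : FreeGroup (Fin s))).prod

/-- If `(G, f) = der_{θ,b}(G, ·)` is a free `n`-ary group of rank `s > 1`, then `(G, ·)`
is a free group of rank `(s-1)(n-1) + 1`. -/
theorem base_group_of_free_nary_is_free {G : Type*} [Group G] (n : ℕ) (hn : 3 ≤ n)
    (s : ℕ) (hs : 1 < s) (θ : G ≃* G) (b : G) (hθb : θ b = b)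
    (hconj : ∀ x : G, (⇑θ)^[n - 1] x = b * x * b⁻¹)
    (hfree : IsFreeNAryGroupOfRank n s
      (fun l : List G => (l.mapIdx fun i x => (⇑θ)^[i] x).prod * b)) :
    Nonempty (FreeGroupBasis (Fin ((s - 1) * (n - 1) + 1)) G) := by
  classical
  obtain ⟨ht, hht, β, hβ⟩ := hfree
  have hm : 0 < n - 1 := by omega
  -- multiplicativity of `β` up to the fixed coefficient
  have hmul : ∀ x y : G, (β (x*y) : FreeGroup (Fin s)) =
      (β x : FreeGroup (Fin s)) *
        ((β (θ.symm b⁻¹) : FreeGroup (Fin s)) * ((β (1:G) : FreeGroup (Fin s)))^(n-3)) *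
        (β y : FreeGroup (Fin s)) := by
    intro x y
    have hl : (x :: θ.symm b⁻¹ :: (List.replicate (n-3) (1:G) ++ [y])).length = n := by
      simp; omega
    have h2 := hβ _ hl
    rw [show ((fun l : List G => (l.mapIdx fun i x => (⇑θ)^[i] x).prod * b)
        (x :: θ.symm b⁻¹ :: (List.replicate (n-3) (1:G) ++ [y])))
      = x * y from nary_deriv_mul n hn θ b hconj x y] at h2
    rw [h2]
    simp only [List.map_cons, List.map_append, List.map_replicate, List.map_nil,
      List.prod_cons, List.prod_append, List.prod_replicate, List.prod_nil]
    group
  -- the homomorphism from G to the free group of rank s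
  set ΦG : G →* FreeGroup (Fin s) := MonoidHom.mk'
    (fun z => (β z : FreeGroup (Fin s)) *
      ((β (θ.symm b⁻¹) : FreeGroup (Fin s)) * ((β (1:G) : FreeGroup (Fin s)))^(n-3)))
    (fun x y => by beta_reduce; rw [hmul x y]; group) with hΦG
  have hΦGapp : ∀ z : G, ΦG z = (β z : FreeGroup (Fin s)) *
      ((β (θ.symm b⁻¹) : FreeGroup (Fin s)) * ((β (1:G) : FreeGroup (Fin s)))^(n-3)) :=
    fun z => rfl
  have hinj : Function.Injective ΦG := by
    intro x y h
    rw [hΦGapp, hΦGapp] at h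
    exact β.injective (Subtype.ext (mul_right_cancel h))
  -- height arithmetic
  have hT1 : ∀ z : G, ((n:ℤ)-1) ∣ (ht (β z : FreeGroup (Fin s))).toAdd - 1 := fun z => (β z).2
  have hrangeΦ : ∀ w, (∃ z, ΦG z = w) ↔ ((n:ℤ)-1) ∣ (ht w).toAdd := by
    intro w
    obtain ⟨k₁, h₁⟩ := hT1 (θ.symm b⁻¹)
    obtain ⟨k₂, h₂⟩ := hT1 1
    have hc3 : (((n:ℕ)-3 : ℕ) : ℤ) = (n:ℤ) - 3 := by omega
    constructor
    · rintro ⟨z, rfl⟩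
      obtain ⟨k₀, h₀⟩ := hT1 z
      refine ⟨k₀ + k₁ + ((n:ℤ)-3)*k₂ + 1, ?_⟩
      rw [hΦGapp]
      simp only [_root_.map_mul, _root_.map_pow, toAdd_mul, toAdd_pow, nsmul_eq_mul]
      rw [hc3]
      linear_combination h₀ + h₁ + ((n:ℤ)-3) * h₂
    · rintro ⟨k, hk⟩
      have hv : ((n:ℤ)-1) ∣ (ht (w * ((β (θ.symm b⁻¹) : FreeGroup (Fin s)) *
          ((β (1:G) : FreeGroup (Fin s)))^(n-3))⁻¹)).toAdd - 1 := by
        refine ⟨k - k₁ - ((n:ℤ)-3)*k₂ - 1, ?_⟩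
        simp only [_root_.map_mul, _root_.map_inv, _root_.map_pow, toAdd_mul, toAdd_inv,
          toAdd_pow, nsmul_eq_mul]
        rw [hc3, show (θ.symm b)⁻¹ = θ.symm b⁻¹ from (_root_.map_inv θ.symm b).symm]
        linear_combination hk - h₁ - ((n:ℤ)-3) * h₂
      refine ⟨β.symm ⟨_, hv⟩, ?_⟩
      rw [hΦGapp]
      rw [Equiv.apply_symm_apply]
      group
  -- the isomorphism between FreeGroup (Fin s) and the shift-by-one semidirect product
  set I := Fin (s-1) with hI
  set e₁ : Fin s ≃ Option (Fin 1 × I) :=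
    (finCongr (by omega : s = (s-1)+1)).trans ((finSuccEquiv (s-1)).trans
      (Equiv.optionCongr (Equiv.uniqueProd I (Fin 1)).symm)) with he₁
  set E : FreeGroup (Fin s) ≃* (FreeGroup (ℤ × I) ⋊[shiftAct I 1] Multiplicative ℤ) :=
    (FreeGroup.freeGroupCongr e₁).trans ((twistAut _).trans (freeSdIso I 1 one_pos)) with hE
  have hEht : ∀ w, (rightHom (E w)).toAdd = (ht w).toAdd := by
    have hcomp : rightHom.comp (E.toMonoidHom) = ht := by
      apply FreeGroup.ext_hom
      intro a
      simp only [MonoidHom.comp_apply, MulEquiv.coe_toMonoidHom, hE, MulEquiv.trans_apply]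
      rw [show (FreeGroup.freeGroupCongr e₁) (FreeGroup.of a) = FreeGroup.of (e₁ a) by simp]
      rw [hht a]
      exact rightHom_freeSdIso_twist (e₁ a)
    intro w
    rw [← hcomp]
    rfl
  -- the injection from the free group of rank (s-1)*(n-1)+1
  set e₂ : Fin ((s-1)*(n-1)+1) ≃ Option (Fin (n-1) × I) :=
    (finSuccEquiv ((s-1)*(n-1))).trans
      (Equiv.optionCongr ((finCongr (mul_comm (s-1) (n-1))).trans finProdFinEquiv.symm)) with he₂
  set ψ₂ : FreeGroup (Fin ((s-1)*(n-1)+1)) →*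
      (FreeGroup (ℤ × I) ⋊[shiftAct I 1] Multiplicative ℤ) :=
    (iotaHom I (n-1)).comp ((freeSdIso I (n-1) hm).toMonoidHom.comp
      (FreeGroup.freeGroupCongr e₂).toMonoidHom) with hψ₂
  set ψ₁ : G →* (FreeGroup (ℤ × I) ⋊[shiftAct I 1] Multiplicative ℤ) :=
    E.toMonoidHom.comp ΦG with hψ₁
  have hinj₁ : Function.Injective ψ₁ := E.injective.comp hinj
  have hinj₂ : Function.Injective ψ₂ :=
    (iotaHom_injective I (n-1) hm).comp
      ((freeSdIso I (n-1) hm).injective.comp (FreeGroup.freeGroupCongr e₂).injective)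
  have hMn : (((n:ℕ)-1 : ℕ) : ℤ) = (n:ℤ) - 1 := by omega
  have hr₁ : ∀ x, x ∈ ψ₁.range ↔ ((n:ℤ)-1) ∣ (rightHom x).toAdd := by
    intro x
    constructor
    · rintro ⟨z, rfl⟩
      have h' : ∃ z', ΦG z' = ΦG z := ⟨z, rfl⟩
      rw [hrangeΦ] at h'
      have : (rightHom (ψ₁ z)).toAdd = (ht (ΦG z)).toAdd := hEht (ΦG z)
      rw [this]
      exact h'
    · intro hx
      have hx' : ((n:ℤ)-1) ∣ (ht (E.symm x)).toAdd := by
        rw [← hEht (E.symm x), MulEquiv.apply_symm_apply]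
        exact hx
      obtain ⟨z, hz⟩ := (hrangeΦ (E.symm x)).2 hx'
      refine ⟨z, ?_⟩
      show E (ΦG z) = x
      rw [hz, MulEquiv.apply_symm_apply]
  have hr₂ : ∀ x, x ∈ ψ₂.range ↔ ((n:ℤ)-1) ∣ (rightHom x).toAdd := by
    intro x
    rw [← hMn]
    constructor
    · rintro ⟨z, rfl⟩
      refine ⟨((freeSdIso I (n-1) hm) ((FreeGroup.freeGroupCongr e₂) z)).right.toAdd, ?_⟩
      show (rightHom (iotaHom I (n-1) _)).toAdd = _
      simp
    · intro hx
      have hx' : x ∈ Set.range (iotaHom I (n-1)) := by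
        rw [iotaHom_range]
        exact hx
      obtain ⟨y, hy⟩ := hx'
      refine ⟨(FreeGroup.freeGroupCongr e₂).symm ((freeSdIso I (n-1) hm).symm y), ?_⟩
      show iotaHom I (n-1) ((freeSdIso I (n-1) hm) ((FreeGroup.freeGroupCongr e₂)
        ((FreeGroup.freeGroupCongr e₂).symm ((freeSdIso I (n-1) hm).symm y)))) = x
      rw [MulEquiv.apply_symm_apply, MulEquiv.apply_symm_apply, hy]
  have hrange : ψ₁.range = ψ₂.range := by
    ext x
    rw [hr₁, hr₂]
  exact ⟨FreeGroupBasis.ofRepr ((MonoidHom.ofInjective hinj₁).trans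
    ((MulEquiv.subgroupCongr hrange).trans (MonoidHom.ofInjective hinj₂).symm))⟩
end

section
/- Let (G,·) be a free group, n ≥ 3, θ an automorphism of (G,·), and b ∈ G with θ(b) = b and θ^{n-1}(x) = bxb⁻¹ for all x. Suppose there exist v₁,…,v_{s-1} ∈ G (s > 1) such that { b } ∪ { θʲ(vᵢ) : 1 ≤ i ≤ s−1, 0 ≤ j ≤ n−2 } is a free basis of (G,·). Then the n-ary group (G,f) with f(x₁,…,xₙ) = x₁θ(x₂)⋯θ^{n-1}(xₙ)b is a free n-ary group of rank s. -/
open Multiplicative SemidirectProduct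

/-- Conversely, if `(G, ·)` is free with a basis `{b} ∪ {θʲ(vᵢ) : 1 ≤ i ≤ s-1, 0 ≤ j ≤ n-2}`,
then `(G, f) = der_{θ,b}(G, ·)` is a free `n`-ary group of rank `s`. -/
theorem free_nary_of_basis {G : Type*} [Group G] (n : ℕ) (hn : 3 ≤ n)
    (s : ℕ) (hs : 1 < s) (θ : G ≃* G) (b : G) (hθb : θ b = b)
    (hconj : ∀ x : G, (⇑θ)^[n - 1] x = b * x * b⁻¹)
    (v : Fin (s - 1) → G)
    (bb : FreeGroupBasis (Unit ⊕ Fin (s - 1) × Fin (n - 1)) G)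
    (hbb : bb (Sum.inl ()) = b)
    (hbv : ∀ (i : Fin (s - 1)) (j : Fin (n - 1)), bb (Sum.inr (i, j)) = (⇑θ)^[(j : ℕ)] (v i)) :
    IsFreeNAryGroupOfRank n s
      (fun l : List G => (l.mapIdx fun i x => (⇑θ)^[i] x).prod * b) := by
  classical
  set u0 : FreeGroup (Fin s) := FreeGroup.of (⟨0, by omega⟩ : Fin s) with hu0
  set fval : Unit ⊕ Fin (s - 1) × Fin (n - 1) → FreeGroup (Fin s) := fun a =>
    match a with
    | Sum.inl _ => u0 ^ (n - 1)
    | Sum.inr (i, j) =>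
        u0 ^ (j : ℕ) * FreeGroup.of (⟨(i : ℕ) + 1, by have := i.2; omega⟩ : Fin s)
          * (u0 ^ ((j : ℕ) + 1))⁻¹
    with hfval
  set φ : G →* FreeGroup (Fin s) := bb.lift fval with hφ
  have hφbb : ∀ a, φ (bb a) = fval a := fun a => by simp [hφ]
  have hφb : φ b = u0 ^ (n - 1) := by rw [← hbb, hφbb]
  -- conjugation identity
  have hφθ : ∀ x : G, φ (θ x) = u0 * φ x * u0⁻¹ := by
    have key : φ.comp θ.toMonoidHom = ((MulAut.conj u0).toMonoidHom).comp φ := by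
      apply bb.ext_hom
      rintro (⟨⟩ | ⟨i, j⟩)
      · simp only [MonoidHom.comp_apply, MulEquiv.coe_toMonoidHom, hbb, hθb,
          MulAut.conj_apply, hφb]
        group
      · simp only [MonoidHom.comp_apply, MulEquiv.coe_toMonoidHom, MulAut.conj_apply]
        rw [hφbb, hbv i j]
        have hA : θ ((⇑θ)^[(j : ℕ)] (v i)) = (⇑θ)^[(j : ℕ) + 1] (v i) :=
          (Function.iterate_succ_apply' θ _ _).symm
        rw [hA]
        by_cases hj : (j : ℕ) + 1 < n - 1
        · rw [show (⇑θ)^[(j : ℕ) + 1] (v i) = bb (Sum.inr (i, ⟨(j : ℕ) + 1, hj⟩)) from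
            (hbv i ⟨(j : ℕ) + 1, hj⟩).symm, hφbb]
          show u0 ^ ((j:ℕ)+1) * FreeGroup.of _ * (u0 ^ ((j:ℕ)+1+1))⁻¹
            = u0 * (u0 ^ (j:ℕ) * FreeGroup.of _ * (u0 ^ ((j:ℕ)+1))⁻¹) * u0⁻¹
          group
        · have hj' : (j : ℕ) + 1 = n - 1 := by have := j.2; omega
          rw [hj', hconj]
          have h0 : v i = bb (Sum.inr (i, ⟨0, by omega⟩)) := by
            rw [hbv]; simp
          rw [h0, map_mul, map_mul, map_inv, hφb, hφbb]
          show u0 ^ (n-1) * (u0 ^ (0:ℕ) * FreeGroup.of _ * (u0 ^ ((0:ℕ)+1))⁻¹) * (u0 ^ (n-1))⁻¹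
            = u0 * (u0 ^ (j:ℕ) * FreeGroup.of _ * (u0 ^ ((j:ℕ)+1))⁻¹) * u0⁻¹
          have h2 : u0 ^ (n - 1) = u0 ^ (j : ℕ) * u0 := by rw [← pow_succ, hj']
          rw [h2]
          group
    intro x
    have := DFunLike.congr_fun key x
    simpa [MulAut.conj_apply] using this
  -- iterated conjugation
  have hφθk : ∀ (k : ℕ) (x : G), φ ((⇑θ)^[k] x) = u0 ^ k * φ x * (u0 ^ k)⁻¹ := by
    intro k
    induction k with
    | zero => intro x; simp
    | succ k ih =>
      intro x
      rw [Function.iterate_succ_apply', hφθ, ih]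
      group
  have hφθsymm : ∀ x : G, φ (θ.symm x) = u0⁻¹ * φ x * u0 := by
    intro x
    have := hφθ (θ.symm x)
    rw [θ.apply_symm_apply] at this
    rw [this]; group
  -- the height homomorphism
  set ht : FreeGroup (Fin s) →* Multiplicative ℤ :=
    FreeGroup.lift (fun _ => Multiplicative.ofAdd (1:ℤ)) with hht
  have hhtof : ∀ x : Fin s, ht (FreeGroup.of x) = Multiplicative.ofAdd 1 := by
    intro x; simp [hht]
  -- divisibility of heights in the range of φ
  have hdvd : ∀ g : G, ((n : ℤ) - 1) ∣ Multiplicative.toAdd (ht (φ g)) := by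
    set q : Multiplicative ℤ →* Multiplicative (ZMod (n - 1)) :=
      AddMonoidHom.toMultiplicative (Int.castAddHom (ZMod (n - 1))) with hq
    have hq1v : q (ofAdd (1:ℤ)) = ofAdd (1 : ZMod (n - 1)) := by
      simp [hq]
    have hq1 : (q.comp ht).comp φ = 1 := by
      apply bb.ext_hom
      rintro (⟨⟩ | ⟨i, j⟩)
      · show q (ht (φ (bb (Sum.inl ())))) = 1
        rw [hφbb]
        show q (ht (u0 ^ (n - 1))) = 1
        simp only [map_pow, hu0, hhtof, hq1v]
        rw [← ofAdd_nsmul]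
        simp [ZMod.natCast_self]
      · show q (ht (φ (bb (Sum.inr (i, j))))) = 1
        rw [hφbb]
        show q (ht (u0 ^ (j:ℕ) * FreeGroup.of (⟨(i:ℕ)+1, _⟩ : Fin s)
          * (u0 ^ ((j:ℕ)+1))⁻¹)) = 1
        simp only [map_mul, map_inv, map_pow, hu0, hhtof, hq1v]
        group
    intro g
    have h1 : q (ht (φ g)) = 1 := by
      have := DFunLike.congr_fun hq1 g
      simpa using this
    have h2 : ((Multiplicative.toAdd (ht (φ g)) : ℤ) : ZMod (n - 1)) = 0 := by
      simpa [hq] using congr_arg Multiplicative.toAdd h1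
    have h3 : ((n - 1 : ℕ) : ℤ) ∣ Multiplicative.toAdd (ht (φ g)) :=
      (ZMod.intCast_zmod_eq_zero_iff_dvd _ _).mp h2
    have : ((n - 1 : ℕ) : ℤ) = (n : ℤ) - 1 := by omega
    rwa [this] at h3
  -- the action of ℤ on G via θ
  set ψ : Multiplicative ℤ →* MulAut G := zpowersHom (MulAut G) θ with hψdef
  have hψk : ∀ k : ℤ, ψ (ofAdd k) = (θ : MulAut G) ^ k := by
    intro k; simp [hψdef]
  have hpow : ∀ (k : ℕ) (x : G), ((θ : MulAut G) ^ k) x = (⇑θ)^[k] x := by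
    intro k
    induction k with
    | zero => intro x; simp
    | succ k ih => intro x; rw [pow_succ', Function.iterate_succ']; simp [ih]
  have hfixb : ∀ a : Multiplicative ℤ, (ψ a) b = b := by
    intro a
    have hmem : (θ : MulAut G) ∈ MulAction.stabilizer (MulAut G) b := by
      simp [MulAction.mem_stabilizer_iff, MulAut.smul_def, hθb]
    have h1 : (θ : MulAut G) ^ (Multiplicative.toAdd a) ∈ MulAction.stabilizer (MulAut G) b :=
      zpow_mem hmem _
    have h2 := MulAction.mem_stabilizer_iff.mp h1
    rw [MulAut.smul_def] at h2
    rw [← ofAdd_toAdd a, hψk]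
    exact h2
  have hψneg : ∀ x : G, (ψ (ofAdd (-((n - 1 : ℕ) : ℤ)))) x = b⁻¹ * x * b := by
    intro x
    rw [hψk, zpow_neg, zpow_natCast]
    have h2 : ((θ : MulAut G) ^ (n - 1 : ℕ)) (b⁻¹ * x * b) = x := by
      rw [hpow, hconj]; group
    calc (((θ : MulAut G) ^ (n-1:ℕ))⁻¹) x
        = (((θ : MulAut G)^(n-1:ℕ))⁻¹) (((θ : MulAut G) ^ (n-1:ℕ)) (b⁻¹ * x * b)) := by
          rw [h2]
      _ = b⁻¹ * x * b := by simp
  -- the extension E = G ⋊ ℤ and the central element e0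
  set e0 : G ⋊[ψ] Multiplicative ℤ := ⟨b, ofAdd (-((n - 1 : ℕ) : ℤ))⟩ with he0
  have hcomm : ∀ x : G ⋊[ψ] Multiplicative ℤ, Commute e0 x := by
    intro x
    show e0 * x = x * e0
    apply SemidirectProduct.ext
    · show e0.left * (ψ e0.right) x.left = x.left * (ψ x.right) e0.left
      rw [hfixb]
      show b * (ψ (ofAdd (-((n - 1 : ℕ) : ℤ)))) x.left = x.left * b
      rw [hψneg]; group
    · show e0.right * x.right = x.right * e0.right
      exact mul_comm _ _
  haveI hnormal : (Subgroup.zpowers e0).Normal := by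
    constructor
    intro x hx g
    obtain ⟨k, hk⟩ := Subgroup.mem_zpowers_iff.mp hx
    have hc : Commute (e0 ^ k) g := (hcomm g).zpow_left k
    have : g * x * g⁻¹ = x := by
      rw [← hk, ← hc.eq]; group
    rw [this]; exact hx
  set π := QuotientGroup.mk' (Subgroup.zpowers e0) with hπ
  set ι : G →* _ := π.comp SemidirectProduct.inl with hι
  have hιinj : Function.Injective ι := by
    rw [injective_iff_map_eq_one]
    intro g hg
    have h1 : (SemidirectProduct.inl g : G ⋊[ψ] Multiplicative ℤ) ∈ Subgroup.zpowers e0 :=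
      (QuotientGroup.eq_one_iff _).mp hg
    obtain ⟨k, hk⟩ := Subgroup.mem_zpowers_iff.mp h1
    have h2 := congr_arg SemidirectProduct.rightHom hk
    rw [map_zpow, SemidirectProduct.rightHom_inl] at h2
    have h3 : SemidirectProduct.rightHom e0 = ofAdd (-((n - 1 : ℕ) : ℤ)) := rfl
    rw [h3] at h2
    have h4 : k * (-((n - 1 : ℕ) : ℤ)) = 0 := by
      have := congr_arg Multiplicative.toAdd h2
      simpa [toAdd_zpow, mul_comm] using this
    have hk0 : k = 0 := by
      rcases mul_eq_zero.mp h4 with h | h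
      · exact h
      · exfalso; omega
    rw [hk0, zpow_zero] at hk
    exact SemidirectProduct.inl_injective (by rw [← hk, map_one])
  -- the homomorphism ρ with ρ ∘ φ = ι
  set ρval : Fin s → _ := fun k =>
    if h : (k : ℕ) = 0 then π (SemidirectProduct.inr (ofAdd (1:ℤ)))
    else π (⟨v ⟨(k : ℕ) - 1, by have := k.2; omega⟩, ofAdd (1:ℤ)⟩ : G ⋊[ψ] Multiplicative ℤ)
    with hρval
  set ρ := FreeGroup.lift ρval with hρ
  have hρu0 : ρ u0 = π (SemidirectProduct.inr (ofAdd (1:ℤ))) := by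
    rw [hu0, hρ, FreeGroup.lift_apply_of, hρval]
    simp
  have hρof : ∀ (k : Fin s) (hk : (k : ℕ) ≠ 0) (i : Fin (s - 1)), ((i : ℕ) = (k : ℕ) - 1) →
      ρ (FreeGroup.of k) = π (⟨v i, ofAdd (1:ℤ)⟩ : G ⋊[ψ] Multiplicative ℤ) := by
    intro k hk i hi
    simp only [hρ, FreeGroup.lift_apply_of, hρval]
    rw [dif_neg hk]
    have : (⟨(k : ℕ) - 1, by have := k.2; omega⟩ : Fin (s - 1)) = i := by
      apply Fin.ext; simp; omega
    rw [this]
  have hρφ : ρ.comp φ = ι := by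
    apply bb.ext_hom
    rintro (⟨⟩ | ⟨i, j⟩)
    · show ρ (φ (bb (Sum.inl ()))) = ι (bb (Sum.inl ()))
      rw [hφbb, hbb]
      show ρ (u0 ^ (n - 1)) = ι b
      rw [map_pow, hρu0, ← map_pow, ← map_pow]
      show π (SemidirectProduct.inr (ofAdd (1:ℤ) ^ (n-1))) = π (SemidirectProduct.inl b)
      rw [hπ, QuotientGroup.mk'_eq_mk']
      refine ⟨e0, Subgroup.mem_zpowers e0, ?_⟩
      apply SemidirectProduct.ext
      · show 1 * (ψ (ofAdd (1:ℤ) ^ (n-1))) e0.left = b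
        rw [one_mul, he0]
        show (ψ (ofAdd (1:ℤ) ^ (n-1))) b = b
        rw [hfixb]
      · show (ofAdd (1:ℤ) ^ (n-1)) * e0.right = 1
        rw [he0]
        show (ofAdd (1:ℤ) ^ (n-1)) * ofAdd (-((n - 1 : ℕ) : ℤ)) = 1
        rw [← ofAdd_nsmul, ← ofAdd_add]
        norm_num
    · show ρ (φ (bb (Sum.inr (i, j)))) = ι (bb (Sum.inr (i, j)))
      rw [hφbb, hbv]
      show ρ (u0 ^ (j:ℕ) * FreeGroup.of (⟨(i:ℕ)+1, _⟩ : Fin s) * (u0 ^ ((j:ℕ)+1))⁻¹)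
        = ι ((⇑θ)^[(j:ℕ)] (v i))
      rw [map_mul, map_mul, map_inv, map_pow, map_pow, hρu0,
        hρof ⟨(i:ℕ)+1, by have := i.2; omega⟩ (by simp) i (by simp)]
      simp only [← map_pow, ← map_inv, ← map_mul]
      show π _ = π (SemidirectProduct.inl ((⇑θ)^[(j:ℕ)] (v i)))
      congr 1
      have hofj : (ofAdd (1:ℤ)) ^ (j:ℕ) = ofAdd ((j:ℕ):ℤ) := by
        rw [← ofAdd_nsmul]; norm_num
      apply SemidirectProduct.ext
      · simp only [SemidirectProduct.mul_left, SemidirectProduct.inv_left,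
          SemidirectProduct.left_inr, SemidirectProduct.right_inr,
          SemidirectProduct.mul_right, SemidirectProduct.left_inl, map_one,
          map_inv, inv_one, mul_one, one_mul]
        rw [hofj, hψk, zpow_natCast, hpow]
      · simp only [SemidirectProduct.mul_right, SemidirectProduct.inv_right,
          SemidirectProduct.right_inr, SemidirectProduct.right_inl]
        group
  have hφinj : Function.Injective φ := by
    intro x y hxy
    apply hιinj
    rw [← DFunLike.congr_fun hρφ x, ← DFunLike.congr_fun hρφ y]
    simp [hxy]
  -- surjectivity onto the kernel
  have hc1 : ∀ w ∈ φ.range, u0 * w * u0⁻¹ ∈ φ.range := by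
    rintro w ⟨g, rfl⟩; exact ⟨θ g, by rw [hφθ]⟩
  have hc2 : ∀ w ∈ φ.range, u0⁻¹ * w * u0 ∈ φ.range := by
    rintro w ⟨g, rfl⟩; exact ⟨θ.symm g, by rw [hφθsymm]⟩
  have hcS : ∀ (k : ℤ), ∀ w ∈ φ.range, u0 ^ k * w * (u0 ^ k)⁻¹ ∈ φ.range := by
    intro k
    induction k using Int.induction_on with
    | zero => intro w hw; simpa using hw
    | succ k ih =>
      intro w hw
      have h1 := hc1 _ (ih w hw)
      have he : u0 ^ ((k:ℤ)+1) * w * (u0 ^ ((k:ℤ)+1))⁻¹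
          = u0 * (u0 ^ (k:ℤ) * w * (u0 ^ (k:ℤ))⁻¹) * u0⁻¹ := by group
      rw [he]; exact h1
    | pred k ih =>
      intro w hw
      have h1 := hc2 _ (ih w hw)
      have he : u0 ^ (-(k:ℤ)-1) * w * (u0 ^ (-(k:ℤ)-1))⁻¹
          = u0⁻¹ * (u0 ^ (-(k:ℤ)) * w * (u0 ^ (-(k:ℤ)))⁻¹) * u0 := by group
      rw [he]; exact h1
  have hpure : ∀ x : Fin s, (pure x : FreeGroup (Fin s)) = FreeGroup.of x := fun _ => rfl
  have hmain : ∀ w : FreeGroup (Fin s),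
      w * (u0 ^ (Multiplicative.toAdd (ht w)))⁻¹ ∈ φ.range := by
    intro w
    induction w using FreeGroup.induction_on with
    | C1 => simpa using one_mem φ.range
    | of x =>
      have hg : Multiplicative.toAdd (ht (FreeGroup.of x)) = 1 := by rw [hhtof]; simp
      rw [hg, zpow_one]
      by_cases hx : (x : ℕ) = 0
      · have hxu : FreeGroup.of x = u0 := by rw [hu0]; congr 1; exact Fin.ext (by simp [hx])
        rw [hxu]
        simpa using one_mem φ.range
      · refine ⟨bb (Sum.inr (⟨(x:ℕ)-1, by have := x.2; omega⟩, ⟨0, by omega⟩)), ?_⟩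
        rw [hφbb]
        show u0 ^ (0:ℕ) * FreeGroup.of (⟨(x:ℕ)-1+1, by have := x.2; omega⟩ : Fin s)
            * (u0 ^ ((0:ℕ)+1))⁻¹ = FreeGroup.of x * u0⁻¹
        rw [show (⟨(x:ℕ)-1+1, by have := x.2; omega⟩ : Fin s) = x from Fin.ext (by simp; omega)]
        rw [pow_zero, one_mul, pow_one]
    | inv_of x ih =>
      have hg : Multiplicative.toAdd (ht (FreeGroup.of x)) = 1 := by rw [hhtof]; simp
      rw [hg, zpow_one] at ih
      have h2 := inv_mem (hcS (-1) _ ih)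
      have he : (u0 ^ (-1:ℤ) * (FreeGroup.of x * u0⁻¹) * (u0 ^ (-1:ℤ))⁻¹)⁻¹
          = (FreeGroup.of x)⁻¹ * u0 := by group
      rw [he] at h2
      have hg2 : Multiplicative.toAdd (ht ((pure x : FreeGroup (Fin s))⁻¹)) = -1 := by
        rw [hpure x, map_inv, hhtof]; simp
      rw [← hpure x, hg2, hpure x]
      simpa using h2
    | mul x y ihx ihy =>
      have hxy : Multiplicative.toAdd (ht (x * y))
          = Multiplicative.toAdd (ht x) + Multiplicative.toAdd (ht y) := by
        rw [map_mul]; simp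
      rw [hxy]
      have h2 := hcS (Multiplicative.toAdd (ht x)) _ ihy
      have h3 := mul_mem ihx h2
      have he : (x * (u0 ^ (Multiplicative.toAdd (ht x)))⁻¹)
            * (u0 ^ (Multiplicative.toAdd (ht x)) * (y * (u0 ^ (Multiplicative.toAdd (ht y)))⁻¹)
              * (u0 ^ (Multiplicative.toAdd (ht x)))⁻¹)
          = x * y * (u0 ^ (Multiplicative.toAdd (ht x) + Multiplicative.toAdd (ht y)))⁻¹ := by
        rw [zpow_add]; group
      rw [he] at h3
      exact h3
  have hrange : ∀ w : FreeGroup (Fin s),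
      ((n:ℤ) - 1) ∣ Multiplicative.toAdd (ht w) → w ∈ φ.range := by
    intro w hw
    obtain ⟨c, hc⟩ := hw
    have h1 := hmain w
    have h2 : u0 ^ (Multiplicative.toAdd (ht w)) ∈ φ.range := by
      refine ⟨b ^ c, ?_⟩
      rw [map_zpow, hφb, hc, ← zpow_natCast, ← zpow_mul]
      congr 1
      rw [show ((n - 1 : ℕ) : ℤ) = (n:ℤ) - 1 from by omega]
    have h3 := mul_mem h1 h2
    simpa using h3
  -- the bijection β
  have hBprop : ∀ g : G, ((n:ℤ) - 1) ∣ (Multiplicative.toAdd (ht (φ g * u0)) - 1) := by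
    intro g
    have h1 : Multiplicative.toAdd (ht (φ g * u0)) - 1 = Multiplicative.toAdd (ht (φ g)) := by
      rw [map_mul, hu0, hhtof]; simp
    rw [h1]; exact hdvd g
  set B : G → {w : FreeGroup (Fin s) // ((n : ℤ) - 1) ∣ (Multiplicative.toAdd (ht w) - 1)} :=
    fun g => ⟨φ g * u0, hBprop g⟩ with hB
  have hBinj : Function.Injective B := by
    intro a c h
    have h2 : φ a * u0 = φ c * u0 := congr_arg Subtype.val h
    exact hφinj (mul_right_cancel h2)
  have hBsurj : Function.Surjective B := by
    rintro ⟨w, hw⟩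
    have h1 : ((n:ℤ)-1) ∣ Multiplicative.toAdd (ht (w * u0⁻¹)) := by
      rw [map_mul, map_inv, hu0, hhtof]
      simpa [sub_eq_add_neg] using hw
    obtain ⟨g, hg⟩ := hrange _ h1
    refine ⟨g, Subtype.ext ?_⟩
    show φ g * u0 = w
    rw [hg]
    group
  -- the multiplicative property
  have haux : ∀ (l : List G) (k : ℕ),
      φ ((l.mapIdx fun i x => (⇑θ)^[k + i] x).prod) * u0 ^ (k + l.length)
        = u0 ^ k * (l.map fun x => φ x * u0).prod := by
    intro l
    induction l with
    | nil => intro k; simp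
    | cons x l ih =>
      intro k
      rw [List.mapIdx_cons]
      have hfn : (List.mapIdx (fun i => (fun i x => (⇑θ)^[k + i] x) (i + 1)) l)
          = (List.mapIdx (fun i x => (⇑θ)^[(k + 1) + i] x) l) := by
        congr 1
        funext i y
        show (⇑θ)^[k + (i+1)] y = (⇑θ)^[(k+1) + i] y
        congr 1
        omega
      rw [hfn]
      have hlen : k + (x :: l).length = (k + 1) + l.length := by simp [List.length_cons]; omega
      rw [hlen, List.prod_cons, map_mul, List.map_cons, List.prod_cons]
      simp only [Nat.add_zero]
      rw [hφθk, mul_assoc, ih (k+1)]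
      group
  refine ⟨ht, hhtof, Equiv.ofBijective B ⟨hBinj, hBsurj⟩, ?_⟩
  intro l hl
  show φ ((l.mapIdx fun i x => (⇑θ)^[i] x).prod * b) * u0 = (l.map fun x => φ x * u0).prod
  have h0 := haux l 0
  simp only [Nat.zero_add, zero_add, pow_zero, one_mul] at h0
  rw [hl] at h0
  rw [map_mul, hφb, mul_assoc, ← pow_succ, show n - 1 + 1 = n from by omega, h0]
end

section
/- Let (G,f) be the free n-ary group on a set X (n ≥ 3), realized as {w ∈ F(X) : ht(w) ≡ 1 mod (n−1)} ⊆ F(X) with f the n-fold product. Then F(X) is the Post cover of (G,f): F(X) is generated by G, G is a coset of the normal subgroup H = {w : ht(w) ≡ 0 mod (n−1)}, F(X)/H ≅ ℤ/(n−1)ℤ, and for any group (K,∗) and any map β: G → K satisfying β(f(w₁,…,wₙ)) = β(w₁)∗⋯∗β(wₙ), there is a unique group homomorphism h: F(X) → K with h|_G = β. -/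
open Multiplicative

open scoped Classical in
noncomputable def postB {X : Type*} (Gs : Set (FreeGroup X)) {K : Type} [Group K]
    (β : Gs → K) (w : FreeGroup X) : K :=
  if hw : w ∈ Gs then β ⟨w, hw⟩ else 1

theorem postB_eq {X : Type*} (Gs : Set (FreeGroup X)) {K : Type} [Group K]
    (β : Gs → K) (w : FreeGroup X) (hw : w ∈ Gs) : postB Gs β w = β ⟨w, hw⟩ :=
  dif_pos hw

theorem post_univ {X : Type*} [Nonempty X] (p : ℕ)
    (ht : FreeGroup X →* Multiplicative ℤ)
    (hht : ∀ x : X, ht (FreeGroup.of x) = Multiplicative.ofAdd 1)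
    (Gs : Set (FreeGroup X))
    (hGs : ∀ w : FreeGroup X, w ∈ Gs ↔ ((p : ℤ) + 2) ∣ (Multiplicative.toAdd (ht w) - 1))
    (K : Type) (instK : Group K) (β : Gs → K)
    (hβ : ∀ (l : List Gs) (w : Gs), l.length = p + 3 →
        (w : FreeGroup X) = (l.map Subtype.val).prod → β w = (l.map β).prod) :
    ∃! h : FreeGroup X →* K, ∀ g : Gs, h g = β g := by
  set e : FreeGroup X := FreeGroup.of (Classical.arbitrary X) with he_def
  have hte : toAdd (ht e) = 1 := by rw [hht]; rfl
  have heGs : e ∈ Gs := by rw [hGs, hte]; simp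
  set c : K := postB Gs β e with hc
  have congrB : ∀ {w w' : FreeGroup X}, w = w' → postB Gs β w = postB Gs β w' :=
    fun h => by rw [h]
  -- the basic consequence of the n-ary homomorphism property
  have L : ∀ (a b : FreeGroup X), a ∈ Gs → b ∈ Gs → ∀ k l : ℕ, k + l + 2 = p + 3 →
      postB Gs β (a * e ^ k * (b * e ^ l)) =
        postB Gs β a * c ^ k * (postB Gs β b * c ^ l) := by
    intro a b ha hb k l hkl
    obtain ⟨q, hq⟩ := (hGs a).mp ha
    obtain ⟨r, hr⟩ := (hGs b).mp hb
    have hw : a * e ^ k * (b * e ^ l) ∈ Gs := by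
      rw [hGs]
      simp only [map_mul, map_pow, toAdd_mul, toAdd_pow, hte, nsmul_eq_mul, mul_one]
      refine ⟨q + r + 1, ?_⟩
      rw [mul_add, mul_add, mul_one, ← hq, ← hr]
      omega
    have key := hβ (⟨a, ha⟩ :: (List.replicate k ⟨e, heGs⟩ ++ ⟨b, hb⟩ :: List.replicate l ⟨e, heGs⟩))
        ⟨_, hw⟩ (by simp; omega)
        (by simp [List.prod_replicate, mul_assoc])
    rw [postB_eq Gs β _ hw, key]
    simp only [List.map_cons, List.map_append, List.map_replicate, List.prod_cons,
      List.prod_append, List.prod_replicate]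
    rw [postB_eq Gs β a ha, postB_eq Gs β b hb, hc, postB_eq Gs β e heGs]
    simp [mul_assoc]
  -- swap lemma
  have C1 : ∀ z : FreeGroup X, ((p : ℤ) + 2) ∣ toAdd (ht z) →
      postB Gs β (e * z) * c = c * postB Gs β (z * e) := by
    intro z dz
    have hez : e * z ∈ Gs := by
      rw [hGs]
      have h1 : toAdd (ht (e * z)) - 1 = toAdd (ht z) := by
        simp [map_mul, toAdd_mul, hte]
      rw [h1]; exact dz
    have hze : z * e ∈ Gs := by
      rw [hGs]
      have h1 : toAdd (ht (z * e)) - 1 = toAdd (ht z) := by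
        simp [map_mul, toAdd_mul, hte]
      rw [h1]; exact dz
    have A := L (e * z) e hez heGs 0 (p+1) (by omega)
    have B := L e (z * e) heGs hze 0 (p+1) (by omega)
    have hAB : postB Gs β (e * z) * c ^ (0:ℕ) * (c * c ^ (p+1)) =
        postB Gs β e * c ^ (0:ℕ) * (postB Gs β (z * e) * c ^ (p+1)) := by
      rw [← hc] at A
      rw [← A, ← B]
      exact congrB (by group)
    rw [← hc] at hAB
    have hfin : postB Gs β (e * z) * c * c ^ (p+1) =
        c * postB Gs β (z * e) * c ^ (p+1) := by
      calc postB Gs β (e * z) * c * c ^ (p+1)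
          = postB Gs β (e * z) * c ^ (0:ℕ) * (c * c ^ (p+1)) := by group
        _ = c * c ^ (0:ℕ) * (postB Gs β (z * e) * c ^ (p+1)) := hAB
        _ = c * postB Gs β (z * e) * c ^ (p+1) := by group
    exact mul_right_cancel hfin
  -- the "binary multiplication" lemma
  have F1 : ∀ u v : FreeGroup X, ((p : ℤ) + 2) ∣ toAdd (ht u) → ((p : ℤ) + 2) ∣ toAdd (ht v) →
      postB Gs β (u * v * e) = postB Gs β (u * e) * c⁻¹ * postB Gs β (v * e) := by
    intro u v du dv
    have hue : u * e ∈ Gs := by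
      rw [hGs]
      have h1 : toAdd (ht (u * e)) - 1 = toAdd (ht u) := by
        simp [map_mul, toAdd_mul, hte]
      rw [h1]; exact du
    have hbmem : (e ^ (p+2))⁻¹ * (v * e) ∈ Gs := by
      rw [hGs]
      have h1 : toAdd (ht ((e ^ (p+2))⁻¹ * (v * e))) - 1 = toAdd (ht v) - ((p:ℤ) + 2) := by
        simp [map_mul, map_inv, map_pow, toAdd_mul, toAdd_inv, toAdd_pow, hte, nsmul_eq_mul]
        ring
      rw [h1]; exact dvd_sub dv dvd_rfl
    have A := L (u * e) ((e ^ (p+2))⁻¹ * (v * e)) hue hbmem (p+1) 0 (by omega)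
    have A' : postB Gs β (u * v * e) =
        postB Gs β (u * e) * c ^ (p+1) * (postB Gs β ((e ^ (p+2))⁻¹ * (v * e)) * c ^ (0:ℕ)) := by
      rw [← A]; exact congrB (by group)
    have B := L e ((e ^ (p+2))⁻¹ * (v * e)) heGs hbmem (p+1) 0 (by omega)
    rw [← hc] at B
    have B' : postB Gs β (v * e) =
        c * c ^ (p+1) * (postB Gs β ((e ^ (p+2))⁻¹ * (v * e)) * c ^ (0:ℕ)) := by
      rw [← B]; exact congrB (by group)
    have hX : postB Gs β ((e ^ (p+2))⁻¹ * (v * e)) * c ^ (0:ℕ) =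
        (c * c ^ (p+1))⁻¹ * postB Gs β (v * e) := by
      rw [B']; group
    rw [A', hX]; group
  -- conjugation by powers of e
  have F2 : ∀ s : ℤ, ∀ z : FreeGroup X, ((p : ℤ) + 2) ∣ toAdd (ht z) →
      postB Gs β (e ^ s * z * e ^ (-s) * e) = c ^ s * postB Gs β (z * e) * c ^ (-s) := by
    intro s
    induction s using Int.induction_on with
    | zero =>
      intro z dz
      have h1 : e ^ (0:ℤ) * z * e ^ (-(0:ℤ)) * e = z * e := by group
      rw [congrB h1]; group
    | succ s ih =>
      intro z dz
      have dz2 : ((p : ℤ) + 2) ∣ toAdd (ht (e ^ (s:ℤ) * z * e ^ (-(s:ℤ)))) := by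
        have h1 : toAdd (ht (e ^ (s:ℤ) * z * e ^ (-(s:ℤ)))) = toAdd (ht z) := by
          simp [map_mul, map_zpow, toAdd_mul, toAdd_zpow, hte, smul_eq_mul]
        rw [h1]; exact dz
      have h1 : e ^ ((s:ℤ)+1) * z * e ^ (-((s:ℤ)+1)) * e
          = e * (e ^ (s:ℤ) * z * e ^ (-(s:ℤ))) := by group
      rw [congrB h1]
      have hC := C1 _ dz2
      have h2 : postB Gs β (e * (e ^ (s:ℤ) * z * e ^ (-(s:ℤ))))
          = c * postB Gs β (e ^ (s:ℤ) * z * e ^ (-(s:ℤ)) * e) * c⁻¹ := by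
        rw [← hC]; group
      rw [h2, ih z dz]
      group
    | pred s ih =>
      intro z dz
      have dz3 : ((p : ℤ) + 2) ∣ toAdd (ht (e ^ (-(s:ℤ)-1) * z * e ^ ((s:ℤ)+1))) := by
        have h1 : toAdd (ht (e ^ (-(s:ℤ)-1) * z * e ^ ((s:ℤ)+1))) = toAdd (ht z) := by
          simp [map_mul, map_zpow, toAdd_mul, toAdd_zpow, hte, smul_eq_mul]
          ring
        rw [h1]; exact dz
      have hC := C1 _ dz3
      have h1 : e * (e ^ (-(s:ℤ)-1) * z * e ^ ((s:ℤ)+1))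
          = (e ^ (-(s:ℤ)) * z * e ^ (-(-(s:ℤ))) * e) := by group
      have h2 : e ^ (-(s:ℤ)-1) * z * e ^ ((s:ℤ)+1) * e
          = e ^ (-(s:ℤ)-1) * z * e ^ (-(-(s:ℤ)-1)) * e := by group
      rw [congrB h1, congrB h2, ih z dz] at hC
      have h3 : postB Gs β (e ^ (-(s:ℤ)-1) * z * e ^ (-(-(s:ℤ)-1)) * e)
          = c⁻¹ * (c ^ (-(s:ℤ)) * postB Gs β (z * e) * c ^ (-(-(s:ℤ))) * c) := by
        rw [hC]; group
      rw [h3]; group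
  -- periodicity
  have Per1 : ∀ a : FreeGroup X, a ∈ Gs →
      postB Gs β (a * e ^ (((p:ℤ)+2))) = postB Gs β a * c ^ (((p:ℤ)+2)) := by
    intro a ha
    have A := L a e ha heGs 0 (p+1) (by omega)
    rw [← hc] at A
    have h1 : a * e ^ (0:ℕ) * (e * e ^ (p+1)) = a * e ^ (((p:ℤ)+2)) := by group
    rw [← congrB h1, A]; group
  have F3 : ∀ q : ℤ, ∀ a : FreeGroup X, a ∈ Gs →
      postB Gs β (a * e ^ (((p:ℤ)+2) * q)) = postB Gs β a * c ^ (((p:ℤ)+2) * q) := by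
    intro q
    induction q using Int.induction_on with
    | zero =>
      intro a ha
      have h1 : a * e ^ (((p:ℤ)+2) * 0) = a := by group
      rw [congrB h1]; group
    | succ q ih =>
      intro a ha
      have hmemq : a * e ^ (((p:ℤ)+2) * (q:ℤ)) ∈ Gs := by
        rw [hGs]
        have h1 : toAdd (ht (a * e ^ (((p:ℤ)+2) * (q:ℤ)))) - 1
            = (toAdd (ht a) - 1) + ((p:ℤ)+2) * (q:ℤ) := by
          simp [map_mul, map_zpow, toAdd_mul, toAdd_zpow, hte, smul_eq_mul]
          ring
        rw [h1]
        exact dvd_add ((hGs a).mp ha) (Dvd.intro _ rfl)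
      have h1 : a * e ^ (((p:ℤ)+2) * ((q:ℤ)+1))
          = a * e ^ (((p:ℤ)+2) * (q:ℤ)) * e ^ (((p:ℤ)+2)) := by group
      rw [congrB h1, Per1 _ hmemq, ih a ha]
      group
    | pred q ih =>
      intro a ha
      have hmemq : a * e ^ (((p:ℤ)+2) * (-(q:ℤ)-1)) ∈ Gs := by
        rw [hGs]
        have h1 : toAdd (ht (a * e ^ (((p:ℤ)+2) * (-(q:ℤ)-1)))) - 1
            = (toAdd (ht a) - 1) + ((p:ℤ)+2) * (-(q:ℤ)-1) := by
          simp [map_mul, map_zpow, toAdd_mul, toAdd_zpow, hte, smul_eq_mul]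
          ring
        rw [h1]
        exact dvd_add ((hGs a).mp ha) (Dvd.intro _ rfl)
      have hP := Per1 _ hmemq
      have h1 : a * e ^ (((p:ℤ)+2) * (-(q:ℤ)-1)) * e ^ (((p:ℤ)+2))
          = a * e ^ (((p:ℤ)+2) * (-(q:ℤ))) := by group
      rw [congrB h1, ih a ha] at hP
      have h2 : postB Gs β (a * e ^ (((p:ℤ)+2) * (-(q:ℤ)-1)))
          = postB Gs β a * c ^ (((p:ℤ)+2) * (-(q:ℤ))) * (c ^ (((p:ℤ)+2)))⁻¹ := by
        rw [eq_mul_inv_iff_mul_eq]; exact hP.symm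
      rw [h2]; group
  -- the candidate homomorphism
  refine ⟨{ toFun := fun w => postB Gs β (w * e ^ ((1:ℤ) - toAdd (ht w))) *
              c ^ (toAdd (ht w) - 1),
            map_one' := ?_, map_mul' := ?_ }, ?_, ?_⟩
  · have h1 : (1 : FreeGroup X) * e ^ ((1:ℤ) - toAdd (ht (1 : FreeGroup X))) = e := by
      simp
    rw [congrB h1, ← hc]
    simp
  · intro u v
    have h1 : u * v * e ^ ((1:ℤ) - toAdd (ht (u * v)))
        = (u * e ^ (-(toAdd (ht u)))) * (e ^ (toAdd (ht u)) * (v * e ^ (-(toAdd (ht v)))) *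
            e ^ (-(toAdd (ht u)))) * e := by
      have h2 : toAdd (ht (u * v)) = toAdd (ht u) + toAdd (ht v) := by
        simp [map_mul, toAdd_mul]
      rw [h2]; group
    have du : ((p:ℤ)+2) ∣ toAdd (ht (u * e ^ (-(toAdd (ht u))))) := by
      have h2 : toAdd (ht (u * e ^ (-(toAdd (ht u))))) = 0 := by
        simp [map_mul, map_zpow, toAdd_mul, toAdd_zpow, hte, smul_eq_mul]
      rw [h2]; exact dvd_zero _
    have dv : ((p:ℤ)+2) ∣ toAdd (ht (e ^ (toAdd (ht u)) * (v * e ^ (-(toAdd (ht v)))) *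
        e ^ (-(toAdd (ht u))))) := by
      have h2 : toAdd (ht (e ^ (toAdd (ht u)) * (v * e ^ (-(toAdd (ht v)))) *
          e ^ (-(toAdd (ht u))))) = 0 := by
        simp [map_mul, map_zpow, toAdd_mul, toAdd_zpow, hte, smul_eq_mul]
      rw [h2]; exact dvd_zero _
    have dv' : ((p:ℤ)+2) ∣ toAdd (ht (v * e ^ (-(toAdd (ht v))))) := by
      have h2 : toAdd (ht (v * e ^ (-(toAdd (ht v))))) = 0 := by
        simp [map_mul, map_zpow, toAdd_mul, toAdd_zpow, hte, smul_eq_mul]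
      rw [h2]; exact dvd_zero _
    rw [congrB h1, F1 _ _ du dv, F2 _ _ dv']
    have h3 : (u * e ^ (-(toAdd (ht u)))) * e = u * e ^ ((1:ℤ) - toAdd (ht u)) := by group
    have h4 : (v * e ^ (-(toAdd (ht v)))) * e = v * e ^ ((1:ℤ) - toAdd (ht v)) := by group
    have h5 : toAdd (ht (u * v)) = toAdd (ht u) + toAdd (ht v) := by
      simp [map_mul, toAdd_mul]
    rw [congrB h3, congrB h4, h5]
    group
  · -- the homomorphism restricts to β on Gs
    intro g
    obtain ⟨q, hq⟩ := (hGs (g : FreeGroup X)).mp g.2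
    simp only [MonoidHom.coe_mk, OneHom.coe_mk]
    have h1 : (g : FreeGroup X) * e ^ ((1:ℤ) - toAdd (ht (g : FreeGroup X)))
        = (g : FreeGroup X) * e ^ (((p:ℤ)+2) * (-q)) := by
      have h2 : (1:ℤ) - toAdd (ht (g : FreeGroup X)) = ((p:ℤ)+2) * (-q) := by
        rw [mul_neg, ← hq]; ring
      rw [h2]
    rw [congrB h1, F3 (-q) _ g.2, hq]
    have h6 : postB Gs β (g : FreeGroup X) = β g := by
      rw [postB_eq Gs β _ g.2]
    rw [h6]
    group
  · -- uniqueness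
    intro h' hh'
    have hofGs : ∀ x : X, FreeGroup.of x ∈ Gs := by
      intro x
      rw [hGs, hht, toAdd_ofAdd]
      simp
    ext x
    rw [hh' ⟨FreeGroup.of x, hofGs x⟩]
    simp only [MonoidHom.coe_mk, OneHom.coe_mk]
    have h1 : (FreeGroup.of x) * e ^ ((1:ℤ) - toAdd (ht (FreeGroup.of x))) = FreeGroup.of x := by
      rw [hht, toAdd_ofAdd]
      simp
    have h2 : c ^ (toAdd (ht (FreeGroup.of x)) - 1) = 1 := by
      rw [hht, toAdd_ofAdd]
      simp
    rw [congrB h1, h2, mul_one, postB_eq Gs β _ (hofGs x)]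


/-- `F(X)` is the Post cover of the free `n`-ary group
`G = {w ∈ F(X) : ht w ≡ 1 mod (n-1)}`: `F(X)` is generated by `G`, `G` is a coset of
the normal subgroup `H = {w : ht w ≡ 0 mod (n-1)}`, `F(X)/H ≅ ℤ/(n-1)ℤ`, and every
`n`-ary-product-preserving map from `G` to a group extends uniquely to a homomorphism
on `F(X)`. -/
theorem free_group_is_post_cover {X : Type*} [Nonempty X] (n : ℕ) (hn : 3 ≤ n)
    (ht : FreeGroup X →* Multiplicative ℤ)
    (hht : ∀ x : X, ht (FreeGroup.of x) = Multiplicative.ofAdd 1)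
    (Gs : Set (FreeGroup X))
    (hGs : ∀ w : FreeGroup X, w ∈ Gs ↔ ((n : ℤ) - 1) ∣ (Multiplicative.toAdd (ht w) - 1))
    (H : Subgroup (FreeGroup X))
    (hH : ∀ w : FreeGroup X, w ∈ H ↔ ((n : ℤ) - 1) ∣ Multiplicative.toAdd (ht w)) :
    Subgroup.closure Gs = ⊤ ∧
    H.Normal ∧
    (∀ w₀ ∈ Gs, Gs = (fun h => h * w₀) '' (H : Set (FreeGroup X))) ∧
    (∃ φ : FreeGroup X →* Multiplicative (ZMod (n - 1)),
      Function.Surjective φ ∧ φ.ker = H) ∧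
    (∀ (K : Type) (_ : Group K) (β : Gs → K),
      (∀ (l : List Gs) (w : Gs), l.length = n →
        (w : FreeGroup X) = (l.map Subtype.val).prod → β w = (l.map β).prod) →
      ∃! h : FreeGroup X →* K, ∀ g : Gs, h g = β g) := by
  have hofGs : ∀ x : X, FreeGroup.of x ∈ Gs := by
    intro x
    rw [hGs, hht, toAdd_ofAdd]
    simp
  refine ⟨?_, ?_, ?_, ?_, ?_⟩
  · rw [eq_top_iff, ← FreeGroup.closure_range_of X]
    exact Subgroup.closure_mono (by rintro w ⟨x, rfl⟩; exact hofGs x)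
  · constructor
    intro h hh g
    rw [hH] at hh ⊢
    simpa using hh
  · intro w₀ hw₀
    ext w
    simp only [Set.mem_image, SetLike.mem_coe]
    constructor
    · intro hw
      refine ⟨w * w₀⁻¹, ?_, by group⟩
      rw [hH]
      rw [hGs] at hw hw₀
      simp only [map_mul, map_inv, toAdd_mul, toAdd_inv]
      obtain ⟨q, hq⟩ := hw; obtain ⟨r, hr⟩ := hw₀
      exact ⟨q - r, by linarith [hq, hr]⟩
    · rintro ⟨h, hh, rfl⟩
      rw [hGs]; rw [hH] at hh; rw [hGs] at hw₀
      simp only [map_mul, toAdd_mul]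
      obtain ⟨q, hq⟩ := hh; obtain ⟨r, hr⟩ := hw₀
      exact ⟨q + r, by linarith⟩
  · refine ⟨(AddMonoidHom.toMultiplicative (Int.castAddHom (ZMod (n-1)))).comp ht, ?_, ?_⟩
    · intro a
      obtain ⟨z, hz⟩ := ZMod.intCast_surjective (n := n - 1) (toAdd a)
      refine ⟨(FreeGroup.of (Classical.arbitrary X)) ^ z, ?_⟩
      simp [hht, hz]
    · ext w
      simp only [MonoidHom.mem_ker, MonoidHom.comp_apply, hH]
      rw [show ((n:ℤ) - 1) = ((n-1 : ℕ) : ℤ) by push_cast [Nat.cast_sub (by omega : 1 ≤ n)]; ring]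
      rw [← ZMod.intCast_zmod_eq_zero_iff_dvd]
      constructor
      · intro h
        have := congrArg toAdd h
        simpa using this
      · intro h
        have := congrArg ofAdd h
        simpa using this
  · intro K instK β hβ
    obtain ⟨p, rfl⟩ : ∃ p, n = p + 3 := ⟨n - 3, by omega⟩
    have hGs' : ∀ w : FreeGroup X, w ∈ Gs ↔ ((p : ℤ) + 2) ∣ (toAdd (ht w) - 1) := by
      intro w
      rw [hGs]
      have : ((p + 3 : ℕ) : ℤ) - 1 = (p : ℤ) + 2 := by push_cast; ring
      rw [this]
    exact post_univ p ht hht Gs hGs' K instK β hβ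
end
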